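/- arXiv:2206.14864 — 7 statements merged into one kernel-verified Lean document; each statement's English description precedes it below -/
import Mathlib

section
/- Let X be a Polish space and V a normed C_b(X)-module. If v_1, …, v_n ∈ V have disjoint supports, i.e. there exist pairwise disjoint closed sets C_1, …, C_n ⊆ X with supp v_i ⊆ C_i for every i, then ‖v_1 + ⋯ + v_n‖ = max_i ‖v_i‖. -/
open BoundedContinuousFunction Filter Topology Set MeasureTheory

noncomputable section

/-- The local seminorm `‖v‖_{|A}` on an (algebraic) `C_b(X)`-module. -/
def locNormCb {X : Type*} [TopologicalSpace X] {V : Type*} [NormedAddCommGroup V]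
    [Module (X →ᵇ ℝ) V] (A : Set X) (v : V) : ℝ :=
  sSup {r : ℝ | ∃ f : X →ᵇ ℝ, tsupport ⇑f ⊆ A ∧ ‖f‖ ≤ 1 ∧ r = ‖f • v‖}

/-- The compatibility inequality defining a normed `C_b(X)`-module:
`‖f_1 v_1 + ⋯ + f_n v_n‖ ≤ (max_i ‖f_i‖)·(max_i ‖v_i‖)` for `f_i` with pairwise
disjoint supports. -/
def CbNormSMulCompat (X : Type*) [TopologicalSpace X] (V : Type*) [NormedAddCommGroup V]
    [Module (X →ᵇ ℝ) V] : Prop :=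
  ∀ (s : Finset ℕ) (f : ℕ → X →ᵇ ℝ) (v : ℕ → V) (M K : ℝ), 0 ≤ M → 0 ≤ K →
    ((s : Set ℕ).Pairwise fun i j => Disjoint (tsupport ⇑(f i)) (tsupport ⇑(f j))) →
    (∀ i ∈ s, ‖f i‖ ≤ M) → (∀ i ∈ s, ‖v i‖ ≤ K) →
    ‖∑ i ∈ s, f i • v i‖ ≤ M * K

/-- The action of constant functions agrees with the real scalar multiplication. -/
def CbConstSMulCompat (X : Type*) [TopologicalSpace X] (V : Type*) [NormedAddCommGroup V]
    [NormedSpace ℝ V] [Module (X →ᵇ ℝ) V] : Prop :=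
  ∀ (c : ℝ) (v : V), const X c • v = c • v

section Aux

set_option linter.unusedSectionVars false

variable {X : Type*} [MetricSpace X]
  {V : Type*} [NormedAddCommGroup V] [NormedSpace ℝ V] [Module (X →ᵇ ℝ) V]

lemma smul_norm_le_cb (hnorm : CbNormSMulCompat X V) (f : X →ᵇ ℝ) (v : V) :
    ‖f • v‖ ≤ ‖f‖ * ‖v‖ := by
  have := hnorm {0} (fun _ => f) (fun _ => v) ‖f‖ ‖v‖ (norm_nonneg f) (norm_nonneg v)
    (by rw [Finset.coe_singleton]; exact Set.pairwise_singleton _ _)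
    (fun i _ => le_rfl) (fun i _ => le_rfl)
  simpa using this

lemma const_smul_smul_cb (hconst : CbConstSMulCompat X V) (c : ℝ) (g : X →ᵇ ℝ) (v : V) :
    (c • g) • v = c • (g • v) := by
  have h : c • g = const X c * g := by
    ext x; simp [smul_eq_mul]
  rw [h, mul_smul, hconst]

lemma cb_smul_finsum {ι : Type*} (s : Finset ι) (f : X →ᵇ ℝ) (g : ι → V) :
    f • ∑ i ∈ s, g i = ∑ i ∈ s, f • g i := by
  classical
  induction s using Finset.induction with
  | empty => rw [Finset.sum_empty, Finset.sum_empty]; exact smul_zero f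
  | @insert a t ha ih =>
    rw [Finset.sum_insert ha, Finset.sum_insert ha, ← ih]
    exact smul_add f (g a) (∑ i ∈ t, g i)

lemma smul_eq_zero_of_locNorm (hconst : CbConstSMulCompat X V) (hnorm : CbNormSMulCompat X V)
    {A : Set X} {v : V} (hv : locNormCb A v = 0) {g : X →ᵇ ℝ} (hg : tsupport ⇑g ⊆ A) :
    g • v = 0 := by
  have key : ∀ f : X →ᵇ ℝ, tsupport ⇑f ⊆ A → ‖f‖ ≤ 1 → f • v = 0 := by
    intro f hf hf1
    have hbdd : BddAbove {r : ℝ | ∃ f : X →ᵇ ℝ, tsupport ⇑f ⊆ A ∧ ‖f‖ ≤ 1 ∧ r = ‖f • v‖} := by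
      refine ⟨‖v‖, ?_⟩
      rintro r ⟨f', _, hf'1, rfl⟩
      calc ‖f' • v‖ ≤ ‖f'‖ * ‖v‖ := smul_norm_le_cb hnorm f' v
        _ ≤ 1 * ‖v‖ := mul_le_mul_of_nonneg_right hf'1 (norm_nonneg v)
        _ = ‖v‖ := one_mul _
    have hmem : ‖f • v‖ ∈ {r : ℝ | ∃ f : X →ᵇ ℝ, tsupport ⇑f ⊆ A ∧ ‖f‖ ≤ 1 ∧ r = ‖f • v‖} :=
      ⟨f, hf, hf1, rfl⟩
    have hle : ‖f • v‖ ≤ locNormCb A v := le_csSup hbdd hmem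
    rw [hv] at hle
    exact norm_le_zero_iff.mp hle
  by_cases h0 : g = 0
  · rw [h0]; exact zero_smul (X →ᵇ ℝ) v
  · have hng : ‖g‖ ≠ 0 := norm_ne_zero_iff.mpr h0
    set g' : X →ᵇ ℝ := ‖g‖⁻¹ • g with hg'
    have hsup : tsupport ⇑g' ⊆ A := by
      refine subset_trans (closure_mono ?_) hg
      have : ⇑g' = ‖g‖⁻¹ • ⇑g := rfl
      rw [this]
      exact Function.support_smul_subset_right _ _
    have hn1 : ‖g'‖ ≤ 1 := by
      have h := norm_smul (‖g‖⁻¹) g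
      rw [hg', h, Real.norm_eq_abs, abs_inv, abs_norm, inv_mul_cancel₀ hng]
    have hz : g' • v = 0 := key g' hsup hn1
    have hgg : g = ‖g‖ • g' := by rw [hg', smul_smul, mul_inv_cancel₀ hng, one_smul]
    rw [hgg, const_smul_smul_cb hconst, hz, smul_zero]

lemma locNormCb_eq_zero_of {A : Set X} {v : V}
    (h : ∀ f : X →ᵇ ℝ, tsupport ⇑f ⊆ A → ‖f‖ ≤ 1 → f • v = 0) :
    locNormCb A v = 0 := by
  have hset : {r : ℝ | ∃ f : X →ᵇ ℝ, tsupport ⇑f ⊆ A ∧ ‖f‖ ≤ 1 ∧ r = ‖f • v‖} = {0} := by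
    ext r
    constructor
    · rintro ⟨f, hf, hf1, rfl⟩
      simp [h f hf hf1]
    · rintro rfl
      refine ⟨0, ?_, by simp, by rw [zero_smul (X →ᵇ ℝ) v, norm_zero]⟩
      have h0 : Function.support ⇑(0 : X →ᵇ ℝ) = ∅ := Function.support_eq_empty_iff.mpr rfl
      rw [tsupport, h0, closure_empty]
      exact Set.empty_subset _
  rw [locNormCb, hset, csSup_singleton]

lemma exists_bump_cb {E U : Set X} (hE : IsClosed E) (hU : IsOpen U) (hEU : E ⊆ U) :
    ∃ h : X →ᵇ ℝ, ‖h‖ ≤ 1 ∧ tsupport ⇑h ⊆ U ∧ tsupport ⇑(1 - h) ⊆ Eᶜ := by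
  obtain ⟨W₂, hW₂o, hEW₂, hW₂U⟩ := normal_exists_closure_subset hE hU hEU
  obtain ⟨W₁, hW₁o, hEW₁, hW₁W₂⟩ := normal_exists_closure_subset hE hW₂o hEW₂
  obtain ⟨f, hf0, hf1, hf01⟩ := exists_continuous_zero_one_of_isClosed
    (isClosed_compl_iff.mpr hW₂o) isClosed_closure
    (disjoint_compl_left.mono_right hW₁W₂)
  have hb : ∀ x y : X, dist (f x) (f y) ≤ 1 := by
    intro x y
    have hx := hf01 x
    have hy := hf01 y
    rw [Real.dist_eq, abs_sub_le_iff]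
    constructor <;> linarith [hx.1, hx.2, hy.1, hy.2]
  refine ⟨mkOfBound f 1 hb, ?_, ?_, ?_⟩
  · rw [norm_le zero_le_one]
    intro x
    have hx := hf01 x
    rw [mkOfBound_coe]
    rw [Real.norm_eq_abs, abs_le]
    constructor <;> linarith [hx.1, hx.2]
  · refine subset_trans (closure_mono ?_) hW₂U
    intro x hx
    by_contra hxW
    exact hx (hf0 hxW)
  · have hsub : Function.support ⇑(1 - mkOfBound f 1 hb) ⊆ W₁ᶜ := by
      intro x hx
      intro hxW₁
      apply hx
      have : (1 - mkOfBound f 1 hb) x = 1 - f x := by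
        simp [mkOfBound_coe]
      rw [this, hf1 (subset_closure hxW₁)]
      simp
    refine subset_trans (closure_minimal hsub (hW₁o.isClosed_compl)) ?_
    exact Set.compl_subset_compl.mpr hEW₁

lemma two_disjoint_cb (hconst : CbConstSMulCompat X V) (hnorm : CbNormSMulCompat X V)
    {C D : Set X} (hC : IsClosed C) (hD : IsClosed D) (hCD : Disjoint C D)
    {v w : V} (hv : locNormCb Cᶜ v = 0) (hw : locNormCb Dᶜ w = 0) :
    ‖v + w‖ = max ‖v‖ ‖w‖ := by
  obtain ⟨U, W, hUo, hWo, hCU, hDW, hUW⟩ := NormalSpace.normal C D hC hD hCD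
  obtain ⟨hc, hc1, hcU, hc1s⟩ := exists_bump_cb hC hUo hCU
  obtain ⟨hd, hd1, hdW, hd1s⟩ := exists_bump_cb hD hWo hDW
  have hUDc : U ⊆ Dᶜ := (hUW.mono_right hDW).subset_compl_right
  have hWCc : W ⊆ Cᶜ := ((hUW.symm).mono_right hCU).subset_compl_right
  have hv1 : (1 - hc) • v = 0 := smul_eq_zero_of_locNorm hconst hnorm hv hc1s
  have hcv : hc • v = v := by
    have h' : (1 - hc) • v = v - hc • v := by
      rw [show ((1 - hc) • v : V) = (1 : X →ᵇ ℝ) • v - hc • v from sub_smul 1 hc v, one_smul]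
    rw [h'] at hv1
    exact (sub_eq_zero.mp hv1).symm
  have hcw : hc • w = 0 := smul_eq_zero_of_locNorm hconst hnorm hw (hcU.trans hUDc)
  have hw1 : (1 - hd) • w = 0 := smul_eq_zero_of_locNorm hconst hnorm hw hd1s
  have hdw : hd • w = w := by
    have h' : (1 - hd) • w = w - hd • w := by
      rw [show ((1 - hd) • w : V) = (1 : X →ᵇ ℝ) • w - hd • w from sub_smul 1 hd w, one_smul]
    rw [h'] at hw1
    exact (sub_eq_zero.mp hw1).symm
  have hdv : hd • v = 0 := smul_eq_zero_of_locNorm hconst hnorm hv (hdW.trans hWCc)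
  have hKnn : (0 : ℝ) ≤ max ‖v‖ ‖w‖ := le_trans (norm_nonneg v) (le_max_left _ _)
  have hle : ‖v + w‖ ≤ max ‖v‖ ‖w‖ := by
    have hpair := hnorm {0, 1} (fun i => if i = 0 then hc else hd)
      (fun i => if i = 0 then v else w) 1 (max ‖v‖ ‖w‖) zero_le_one hKnn
      (by
        intro i hi j hj hij
        simp only [Finset.coe_insert, Finset.coe_singleton, Set.mem_insert_iff,
          Set.mem_singleton_iff] at hi hj
        have hdisjt : Disjoint (tsupport ⇑hc) (tsupport ⇑hd) := hUW.mono hcU hdW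
        rcases hi with rfl | rfl <;> rcases hj with rfl | rfl
        · exact absurd rfl hij
        · simpa using hdisjt
        · simpa using hdisjt.symm
        · exact absurd rfl hij)
      (by intro i _; split <;> assumption)
      (by intro i _; split
          · exact le_max_left _ _
          · exact le_max_right _ _)
    rw [Finset.sum_insert (by simp), Finset.sum_singleton] at hpair
    simp only [↓reduceIte, one_mul] at hpair
    calc ‖v + w‖ = ‖hc • v + hd • w‖ := by rw [hcv, hdw]
      _ ≤ max ‖v‖ ‖w‖ := hpair
  have h1 : ‖v‖ ≤ ‖v + w‖ := by
    have hcvw : hc • (v + w) = v := by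
      rw [show (hc • (v + w) : V) = hc • v + hc • w from smul_add hc v w, hcv, hcw, add_zero]
    calc ‖v‖ = ‖hc • (v + w)‖ := by rw [hcvw]
      _ ≤ ‖hc‖ * ‖v + w‖ := smul_norm_le_cb hnorm _ _
      _ ≤ 1 * ‖v + w‖ := mul_le_mul_of_nonneg_right hc1 (norm_nonneg _)
      _ = ‖v + w‖ := one_mul _
  have h2 : ‖w‖ ≤ ‖v + w‖ := by
    have hdvw : hd • (v + w) = w := by
      rw [show (hd • (v + w) : V) = hd • v + hd • w from smul_add hd v w, hdv, hdw, zero_add]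
    calc ‖w‖ = ‖hd • (v + w)‖ := by rw [hdvw]
      _ ≤ ‖hd‖ * ‖v + w‖ := smul_norm_le_cb hnorm _ _
      _ ≤ 1 * ‖v + w‖ := mul_le_mul_of_nonneg_right hd1 (norm_nonneg _)
      _ = ‖v + w‖ := one_mul _
  exact le_antisymm hle (max_le h1 h2)

lemma aux_main_cb (hconst : CbConstSMulCompat X V) (hnorm : CbNormSMulCompat X V) :
    ∀ n : ℕ, 0 < n → ∀ (v : Fin n → V) (C : Fin n → Set X), (∀ i, IsClosed (C i)) →
      Pairwise (Function.onFun Disjoint C) → (∀ i, locNormCb (C i)ᶜ (v i) = 0) →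
      ‖∑ i, v i‖ = ⨆ i, ‖v i‖ := by
  intro n
  induction n with
  | zero => intro h; exact absurd h (lt_irrefl 0)
  | succ m ih =>
    intro _ v C hC hdisj hsupp
    rcases Nat.eq_zero_or_pos m with hm | hm
    · subst hm
      rw [Fin.sum_univ_one]
      apply le_antisymm
      · exact le_ciSup (f := fun i => ‖v i‖) (Set.Finite.bddAbove (Set.finite_range _)) 0
      · refine ciSup_le fun i => ?_
        rw [Fin.eq_zero i]
    · haveI : Nonempty (Fin m) := Fin.pos_iff_nonempty.mp hm
      set D : Set X := ⋃ i : Fin m, C i.castSucc with hDdef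
      have hDc : IsClosed D := isClosed_iUnion_of_finite fun i => hC _
      have hdisjD : Disjoint D (C (Fin.last m)) :=
        Set.disjoint_iUnion_left.mpr fun i => hdisj (Fin.castSucc_lt_last i).ne
      set u : V := ∑ i : Fin m, v i.castSucc with hudef
      have hu : locNormCb Dᶜ u = 0 := by
        apply locNormCb_eq_zero_of
        intro f hf _
        rw [cb_smul_finsum]
        refine Finset.sum_eq_zero fun i _ => ?_
        exact smul_eq_zero_of_locNorm hconst hnorm (hsupp _)
          (hf.trans (Set.compl_subset_compl.mpr (Set.subset_iUnion (fun i : Fin m => C i.castSucc) i)))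
      have key := two_disjoint_cb hconst hnorm hDc (hC (Fin.last m)) hdisjD hu
        (hsupp (Fin.last m))
      have hsum : ∑ i, v i = u + v (Fin.last m) := Fin.sum_univ_castSucc v
      have hihs : ‖u‖ = ⨆ i : Fin m, ‖v i.castSucc‖ := by
        rw [hudef]
        exact ih hm (fun i => v i.castSucc) (fun i => C i.castSucc) (fun i => hC _)
          (fun i j hij => hdisj (fun h => hij (Fin.castSucc_injective m h)))
          (fun i => hsupp _)
      rw [hsum, key, hihs]
      have hbdd : BddAbove (Set.range fun i : Fin (m + 1) => ‖v i‖) :=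
        Set.Finite.bddAbove (Set.finite_range _)
      have hbdd' : BddAbove (Set.range fun i : Fin m => ‖v i.castSucc‖) :=
        Set.Finite.bddAbove (Set.finite_range _)
      apply le_antisymm
      · apply max_le
        · exact ciSup_le fun i => le_ciSup hbdd i.castSucc
        · exact le_ciSup hbdd (Fin.last m)
      · refine ciSup_le fun i => ?_
        induction i using Fin.lastCases with
        | last => exact le_max_right _ _
        | cast j => exact le_trans (le_ciSup hbdd' j) (le_max_left _ _)

end Aux

/-- if `v_1, …, v_n` in a normed `C_b(X)`-module have disjoint supports
(there are pairwise disjoint closed sets `C_i` with `supp v_i ⊆ C_i`), then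
`‖v_1 + ⋯ + v_n‖ = max_i ‖v_i‖`. -/
theorem statement0 {X : Type*} [MetricSpace X] [CompleteSpace X]
    [TopologicalSpace.SeparableSpace X]
    {V : Type*} [NormedAddCommGroup V] [NormedSpace ℝ V] [Module (X →ᵇ ℝ) V]
    (hconst : CbConstSMulCompat X V) (hnorm : CbNormSMulCompat X V)
    (n : ℕ) (hn : 0 < n) (v : Fin n → V) (C : Fin n → Set X)
    (hC : ∀ i, IsClosed (C i)) (hdisj : Pairwise (Function.onFun Disjoint C))
    (hsupp : ∀ i, locNormCb (C i)ᶜ (v i) = 0) :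
    ‖∑ i, v i‖ = ⨆ i, ‖v i‖ :=
  aux_main_cb hconst hnorm n hn v C hC hdisj hsupp
end
end

section
/- Let X be a Polish space, R ⊆ C_b(X) a subring that approximates open sets, and V a normed R-module. Then for every φ ∈ R, v ∈ V and x ∈ X one has |φ v|_g(x) = |φ(x)| · |v|_g(x), where |·|_g denotes the germ seminorm. -/
open BoundedContinuousFunction Filter Topology Set MeasureTheory ENNReal

noncomputable section

/-- A subring `R ⊆ C_b(X)` approximates open sets. -/
structure ApproximatesOpenSets {X : Type*} [TopologicalSpace X] (R : Subring (X →ᵇ ℝ)) : Prop where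
  const_mem : ∀ c : ℝ, const X c ∈ R
  sup_mem : ∀ f g : X →ᵇ ℝ, f ∈ R → g ∈ R → ∃ h ∈ R, ∀ x, h x = max (f x) (g x)
  inf_mem : ∀ f g : X →ᵇ ℝ, f ∈ R → g ∈ R → ∃ h ∈ R, ∀ x, h x = min (f x) (g x)
  const_mul_mem : ∀ (c : ℝ) (f : X →ᵇ ℝ), f ∈ R → const X c * f ∈ R
  approx : ∀ A : Set X, IsOpen A →
    ∃ f : ℕ → X →ᵇ ℝ, (∀ k, f k ∈ R) ∧ (∀ x, Monotone fun k => f k x) ∧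
      ∀ x, Tendsto (fun k => f k x) atTop (𝓝 (A.indicator (fun _ => (1:ℝ)) x))

/-- The action of constant functions in `R` agrees with the real scalar multiplication. -/
def ConstSMulCompat {X : Type*} [TopologicalSpace X] (R : Subring (X →ᵇ ℝ)) (V : Type*)
    [NormedAddCommGroup V] [NormedSpace ℝ V] [Module R V] : Prop :=
  ∀ (c : ℝ) (hc : const X c ∈ R) (v : V), (⟨const X c, hc⟩ : ↥R) • v = c • v

/-- The compatibility inequality defining a normed `R`-module. -/
def NormSMulCompat {X : Type*} [TopologicalSpace X] (R : Subring (X →ᵇ ℝ)) (V : Type*)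
    [NormedAddCommGroup V] [Module R V] : Prop :=
  ∀ (s : Finset ℕ) (f : ℕ → ↥R) (v : ℕ → V) (M K : ℝ), 0 ≤ M → 0 ≤ K →
    ((s : Set ℕ).Pairwise fun i j =>
      Disjoint (tsupport ⇑((f i : X →ᵇ ℝ))) (tsupport ⇑((f j : X →ᵇ ℝ)))) →
    (∀ i ∈ s, ‖(f i : X →ᵇ ℝ)‖ ≤ M) → (∀ i ∈ s, ‖v i‖ ≤ K) →
    ‖∑ i ∈ s, f i • v i‖ ≤ M * K

/-- The local seminorm `‖v‖_{|A}`. -/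
def locNorm {X : Type*} [TopologicalSpace X] (R : Subring (X →ᵇ ℝ)) {V : Type*}
    [NormedAddCommGroup V] [Module R V] (A : Set X) (v : V) : ℝ :=
  sSup {r : ℝ | ∃ f : ↥R, tsupport ⇑((f : X →ᵇ ℝ)) ⊆ A ∧ ‖(f : X →ᵇ ℝ)‖ ≤ 1 ∧ r = ‖f • v‖}

/-- The germ seminorm `|v|_g(x)`. -/
def germNorm {X : Type*} [TopologicalSpace X] (R : Subring (X →ᵇ ℝ)) {V : Type*}
    [NormedAddCommGroup V] [Module R V] (v : V) (x : X) : ℝ :=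
  sInf {r : ℝ | ∃ A : Set X, IsOpen A ∧ x ∈ A ∧ r = locNorm R A v}

/-- `supp v ⊆ B`: there is a closed set `C ⊆ B` with `‖v‖_{|X∖C} = 0`. -/
def suppIn {X : Type*} [TopologicalSpace X] (R : Subring (X →ᵇ ℝ)) {V : Type*}
    [NormedAddCommGroup V] [Module R V] (v : V) (B : Set X) : Prop :=
  ∃ C : Set X, IsClosed C ∧ C ⊆ B ∧ locNorm R Cᶜ v = 0

/-- σ-additivity, with convergence of the partial sums in norm. -/
def SigmaAdditive {X : Type*} [MeasurableSpace X] {E : Type*} [NormedAddCommGroup E]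
    (N : Set X → E) : Prop :=
  ∀ A : ℕ → Set X, (∀ n, MeasurableSet (A n)) → Pairwise (Function.onFun Disjoint A) →
    Tendsto (fun n => ∑ k ∈ Finset.range n, N (A k)) atTop (𝓝 (N (⋃ k, A k)))

/-- A local vector measure on the normed `R`-module `V`. -/
structure IsLocalVectorMeasure {X : Type*} [TopologicalSpace X] [MeasurableSpace X]
    (R : Subring (X →ᵇ ℝ)) {V : Type*} [NormedAddCommGroup V] [NormedSpace ℝ V] [Module R V]
    (N : Set X → V →L[ℝ] ℝ) : Prop where
  sigma_additive : SigmaAdditive N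
  weakly_local : ∀ A : Set X, IsOpen A → ∀ v : V, locNorm R A v = 0 → N A v = 0

/-- The total variation `|N|(B)`, as the supremum of `Σ ‖N(A_i)‖` over finite Borel
partitions of `B`. -/
def totalVar {X : Type*} [MeasurableSpace X] {E : Type*} [NormedAddCommGroup E]
    (N : Set X → E) (B : Set X) : ℝ≥0∞ :=
  ⨆ (n : ℕ) (A : Fin n → Set X)
    (_ : (∀ i, MeasurableSet (A i)) ∧ Pairwise (Function.onFun Disjoint A) ∧ (⋃ i, A i) = B),
      ∑ i, (‖N (A i)‖₊ : ℝ≥0∞)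

/-- Tightness of a functional `F ∈ V'` with respect to `R`. -/
def IsTight {X : Type*} [TopologicalSpace X] (R : Subring (X →ᵇ ℝ)) {V : Type*}
    [NormedAddCommGroup V] [NormedSpace ℝ V] [Module R V] (F : V →L[ℝ] ℝ) : Prop :=
  ∀ (v : V) (f : ℕ → ↥R),
    (∀ x, Antitone fun n => ((f n : X →ᵇ ℝ)) x) →
    (∀ x, Tendsto (fun n => ((f n : X →ᵇ ℝ)) x) atTop (𝓝 (0:ℝ))) →
    Tendsto (fun n => F ((f n) • v)) atTop (𝓝 (0:ℝ))


set_option linter.unusedSectionVars false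
set_option linter.unusedVariables false
set_option maxHeartbeats 1000000

section Helpers

variable {X : Type*} [TopologicalSpace X] {V : Type*} [NormedAddCommGroup V] [NormedSpace ℝ V]
  {R : Subring (X →ᵇ ℝ)} [Module R V]

lemma norm_rsmul_le (hnorm : NormSMulCompat R V) (f : ↥R) (v : V) :
    ‖f • v‖ ≤ ‖(f : X →ᵇ ℝ)‖ * ‖v‖ := by
  have h := hnorm {0} (fun _ => f) (fun _ => v) ‖(f : X →ᵇ ℝ)‖ ‖v‖ (norm_nonneg _)
    (norm_nonneg _) (by simp) (by simp) (by simp)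
  simpa using h

lemma zero_mem_locSet (A : Set X) (v : V) :
    (0:ℝ) ∈ {r : ℝ | ∃ f : ↥R, tsupport ⇑((f : X →ᵇ ℝ)) ⊆ A ∧ ‖(f : X →ᵇ ℝ)‖ ≤ 1 ∧
      r = ‖f • v‖} := by
  refine ⟨0, ?_, ?_, ?_⟩
  · simp [tsupport]
  · simp
  · simp

lemma bddAbove_locSet (hnorm : NormSMulCompat R V) (A : Set X) (v : V) :
    BddAbove {r : ℝ | ∃ f : ↥R, tsupport ⇑((f : X →ᵇ ℝ)) ⊆ A ∧ ‖(f : X →ᵇ ℝ)‖ ≤ 1 ∧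
      r = ‖f • v‖} := by
  refine ⟨‖v‖, ?_⟩
  rintro r ⟨f, -, hf1, rfl⟩
  calc ‖f • v‖ ≤ ‖(f : X →ᵇ ℝ)‖ * ‖v‖ := norm_rsmul_le hnorm f v
    _ ≤ 1 * ‖v‖ := by gcongr
    _ = ‖v‖ := one_mul _

lemma locNorm_nonneg (hnorm : NormSMulCompat R V) (A : Set X) (v : V) :
    0 ≤ locNorm R A v :=
  le_csSup (bddAbove_locSet hnorm A v) (zero_mem_locSet A v)

lemma locNorm_le {A : Set X} {v : V} {C : ℝ}
    (h : ∀ f : ↥R, tsupport ⇑((f : X →ᵇ ℝ)) ⊆ A → ‖(f : X →ᵇ ℝ)‖ ≤ 1 → ‖f • v‖ ≤ C) :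
    locNorm R A v ≤ C :=
  csSup_le ⟨0, zero_mem_locSet A v⟩ (by rintro r ⟨f, h1, h2, rfl⟩; exact h f h1 h2)

lemma norm_smul_le_locNorm (hnorm : NormSMulCompat R V) {A : Set X} {v : V} (f : ↥R)
    (h1 : tsupport ⇑((f : X →ᵇ ℝ)) ⊆ A) (h2 : ‖(f : X →ᵇ ℝ)‖ ≤ 1) :
    ‖f • v‖ ≤ locNorm R A v :=
  le_csSup (bddAbove_locSet hnorm A v) ⟨f, h1, h2, rfl⟩

lemma germNorm_le_locNorm (hnorm : NormSMulCompat R V) {A : Set X} (hA : IsOpen A) {x : X}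
    (hx : x ∈ A) (v : V) : germNorm R v x ≤ locNorm R A v :=
  csInf_le ⟨0, by rintro r ⟨B, hB, hxB, rfl⟩; exact locNorm_nonneg hnorm B v⟩ ⟨A, hA, hx, rfl⟩

lemma germNorm_nonneg (hnorm : NormSMulCompat R V) (v : V) (x : X) :
    0 ≤ germNorm R v x :=
  le_csInf ⟨locNorm R univ v, univ, isOpen_univ, mem_univ x, rfl⟩
    (by rintro r ⟨B, hB, hxB, rfl⟩; exact locNorm_nonneg hnorm B v)

lemma le_germNorm (hnorm : NormSMulCompat R V) {v : V} {x : X} {C : ℝ}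
    (h : ∀ A : Set X, IsOpen A → x ∈ A → C ≤ locNorm R A v) : C ≤ germNorm R v x :=
  le_csInf ⟨locNorm R univ v, univ, isOpen_univ, mem_univ x, rfl⟩
    (by rintro r ⟨B, hB, hxB, rfl⟩; exact h B hB hxB)

lemma tsupport_subset_of_zero {f g : X → ℝ} (h : ∀ y, f y = 0 → g y = 0) :
    tsupport g ⊆ tsupport f := by
  apply closure_mono
  intro y hy
  simp only [Function.mem_support] at hy ⊢
  exact fun h0 => hy (h y h0)

lemma le_mul_of_forall_pos {p a L : ℝ} (hL : 0 ≤ L)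
    (h : ∀ ε : ℝ, 0 < ε → p ≤ (a + ε) * L) : p ≤ a * L := by
  have t1 : Tendsto (fun n : ℕ => a + 1/((n:ℝ)+1)) atTop (𝓝 (a + 0)) :=
    tendsto_const_nhds.add tendsto_one_div_add_atTop_nhds_zero_nat
  have t : Tendsto (fun n : ℕ => (a + 1/((n:ℝ)+1)) * L) atTop (𝓝 (a * L)) := by
    simpa using t1.mul_const L
  exact ge_of_tendsto t (Eventually.of_forall fun n => h _ (by positivity))

lemma mul_le_of_forall_lt' {a G D : ℝ} (ha : 0 < a)
    (h : ∀ c : ℝ, 0 < c → c < a → c * G ≤ D) : a * G ≤ D := by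
  have t1 : Tendsto (fun n : ℕ => a - a * (1/((n:ℝ)+2))) atTop (𝓝 (a - a * 0)) := by
    refine tendsto_const_nhds.sub (tendsto_const_nhds.mul ?_)
    have h2 : Tendsto (fun n : ℕ => ((n:ℝ)+2)) atTop atTop :=
      tendsto_atTop_add_const_right atTop 2 tendsto_natCast_atTop_atTop
    simpa [one_div, Pi.inv_def] using h2.inv_tendsto_atTop
  have t : Tendsto (fun n : ℕ => (a - a * (1/((n:ℝ)+2))) * G) atTop (𝓝 (a * G)) := by
    simpa using t1.mul_const G
  refine le_of_tendsto t (Eventually.of_forall fun n => ?_)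
  refine h _ ?_ ?_
  · have hn : (0:ℝ) ≤ n := Nat.cast_nonneg n
    have h1 : (1:ℝ)/((n:ℝ)+2) < 1 := by
      rw [div_lt_one (by linarith)]; linarith
    nlinarith
  · have hn : (0:ℝ) ≤ n := Nat.cast_nonneg n
    nlinarith [show (0:ℝ) < a * (1/((n:ℝ)+2)) by positivity]

end Helpers

section Helpers2

variable {X : Type*} [TopologicalSpace X] {V : Type*} [NormedAddCommGroup V] [NormedSpace ℝ V]
  {R : Subring (X →ᵇ ℝ)} [Module R V]

lemma rsmul_const_mul (hR : ApproximatesOpenSets R) (hconst : ConstSMulCompat R V)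
    (c : ℝ) (g : ↥R) (v : V) :
    ((⟨const X c * (g : X →ᵇ ℝ), hR.const_mul_mem c _ g.2⟩ : ↥R)) • v = c • (g • v) := by
  have h : (⟨const X c * (g : X →ᵇ ℝ), hR.const_mul_mem c _ g.2⟩ : ↥R)
      = (⟨const X c, hR.const_mem c⟩ : ↥R) * g := rfl
  rw [h, mul_smul, hconst]

end Helpers2

/-- for `φ ∈ R`, `v ∈ V` and `x ∈ X` one has
`|φ v|_g(x) = |φ(x)| · |v|_g(x)`. -/
theorem statement1 {X : Type*} [MetricSpace X] [CompleteSpace X]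
    [TopologicalSpace.SeparableSpace X]
    {V : Type*} [NormedAddCommGroup V] [NormedSpace ℝ V]
    (R : Subring (X →ᵇ ℝ)) [Module R V]
    (hR : ApproximatesOpenSets R) (hconst : ConstSMulCompat R V) (hnorm : NormSMulCompat R V)
    (φ : ↥R) (v : V) (x : X) :
    germNorm R (φ • v) x = |(φ : X →ᵇ ℝ) x| * germNorm R v x := by
  have hφcont : Continuous fun y => |(φ : X →ᵇ ℝ) y| := (map_continuous (φ : X →ᵇ ℝ)).abs
  set a : ℝ := |(φ : X →ᵇ ℝ) x| with ha
  have ha0 : 0 ≤ a := abs_nonneg _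
  -- UPPER BOUND
  have key_ub : ∀ B : Set X, IsOpen B → x ∈ B →
      germNorm R (φ • v) x ≤ a * locNorm R B v := by
    intro B hB hxB
    refine le_mul_of_forall_pos (locNorm_nonneg hnorm B v) ?_
    intro ε hε
    set c : ℝ := a + ε with hc
    have hc0 : 0 < c := by positivity
    set A : Set X := B ∩ {y | |(φ : X →ᵇ ℝ) y| < c} with hA
    have hAopen : IsOpen A := hB.inter (isOpen_lt hφcont continuous_const)
    have hxA : x ∈ A := ⟨hxB, by simp only [mem_setOf_eq]; linarith⟩
    refine (germNorm_le_locNorm hnorm hAopen hxA _).trans ?_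
    refine locNorm_le ?_
    intro f hsupp hf1
    set g : ↥R := ⟨const X (1/c) * ((f * φ : ↥R) : X →ᵇ ℝ),
      hR.const_mul_mem _ _ (f * φ : ↥R).2⟩ with hg
    have hgv : g • v = (1/c) • ((f * φ) • v) := rsmul_const_mul hR hconst _ _ _
    have hfφv : (f * φ) • v = f • (φ • v) := mul_smul f φ v
    have hgval : ∀ y, (g : X →ᵇ ℝ) y = (1/c) * ((f : X →ᵇ ℝ) y * (φ : X →ᵇ ℝ) y) := by
      intro y; simp [hg]
    have hsuppg : tsupport ⇑((g : X →ᵇ ℝ)) ⊆ B := by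
      refine (tsupport_subset_of_zero (f := ⇑((f : X →ᵇ ℝ))) ?_).trans
        (hsupp.trans inter_subset_left)
      intro y hy
      rw [hgval y, hy]; ring
    have hgnorm : ‖(g : X →ᵇ ℝ)‖ ≤ 1 := by
      refine (BoundedContinuousFunction.norm_le zero_le_one).2 ?_
      intro y
      rw [Real.norm_eq_abs, hgval y]
      by_cases hy : (f : X →ᵇ ℝ) y = 0
      · rw [hy]; simp
      · have hyA : y ∈ A := hsupp (subset_closure hy)
        have hφy : |(φ : X →ᵇ ℝ) y| ≤ c := le_of_lt hyA.2
        have hfy : |(f : X →ᵇ ℝ) y| ≤ 1 := by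
          have h2 := (f : X →ᵇ ℝ).norm_coe_le_norm y
          rw [Real.norm_eq_abs] at h2; linarith
        rw [abs_mul, abs_mul, abs_of_pos (show (0:ℝ) < 1/c by positivity)]
        rw [div_mul_eq_mul_div, one_mul, div_le_one hc0]
        calc |(f : X →ᵇ ℝ) y| * |(φ : X →ᵇ ℝ) y| ≤ 1 * c :=
              mul_le_mul hfy hφy (abs_nonneg _) zero_le_one
          _ = c := one_mul c
    have hbound : ‖g • v‖ ≤ locNorm R B v := norm_smul_le_locNorm hnorm g hsuppg hgnorm
    have heq : ‖f • (φ • v)‖ = c * ‖g • v‖ := by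
      rw [hgv, hfφv, norm_smul (1/c), Real.norm_eq_abs,
        abs_of_pos (show (0:ℝ) < 1/c by positivity)]
      field_simp
    rw [heq]
    exact mul_le_mul_of_nonneg_left hbound (le_of_lt hc0)
  have hub : germNorm R (φ • v) x ≤ a * germNorm R v x := by
    rcases eq_or_lt_of_le ha0 with h0 | h0
    · have h1 := key_ub univ isOpen_univ (mem_univ x)
      rw [← h0] at h1 ⊢
      simpa using h1
    · have h1 : germNorm R (φ • v) x / a ≤ germNorm R v x := by
        refine le_germNorm hnorm ?_
        intro B hB hxB
        rw [div_le_iff₀ h0]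
        exact (key_ub B hB hxB).trans_eq (mul_comm _ _)
      exact ((div_le_iff₀ h0).mp h1).trans_eq (mul_comm _ _)
  -- LOWER BOUND
  have hlb : a * germNorm R v x ≤ germNorm R (φ • v) x := by
    rcases eq_or_lt_of_le ha0 with h0 | h0
    · rw [← h0, zero_mul]; exact germNorm_nonneg hnorm _ x
    refine mul_le_of_forall_lt' h0 ?_
    intro c hc0 hca
    refine le_germNorm hnorm ?_
    intro A hAopen hxA
    set L : ℝ := locNorm R A (φ • v) with hLdef
    have hLnn : 0 ≤ L := locNorm_nonneg hnorm _ _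
    set B : Set X := A ∩ {y | c < |(φ : X →ᵇ ℝ) y|} with hB
    have hBopen : IsOpen B := hAopen.inter (isOpen_lt continuous_const hφcont)
    have hxB : x ∈ B := ⟨hxA, by simp only [mem_setOf_eq]; exact hca⟩
    have hstep : locNorm R B v ≤ (1/c) * L := by
      refine locNorm_le ?_
      intro f hsupp hf1
      set M : ℝ := max ‖(φ : X →ᵇ ℝ)‖ c with hM
      have hM0 : 0 < M := lt_max_of_lt_right hc0
      have hMφ : ‖(φ : X →ᵇ ℝ)‖ ≤ M := le_max_left _ _
      have hcM : c ≤ M := le_max_right _ _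
      set θ : ℝ := 1 - c^2/M^2 with hθdef
      have hθ0 : 0 ≤ θ := by
        have h1 : c^2 ≤ M^2 := by nlinarith
        have h2 : c^2/M^2 ≤ 1 := by rw [div_le_one (by positivity)]; exact h1
        simp only [hθdef]; linarith
      have hθ1 : θ < 1 := by
        have h1 : 0 < c^2/M^2 := by positivity
        simp only [hθdef]; linarith
      set u : ↥R := 1 - ⟨const X (1/M^2), hR.const_mem _⟩ * φ^2 with hu
      have huy : ∀ y, (u : X →ᵇ ℝ) y = 1 - ((φ : X →ᵇ ℝ) y)^2/M^2 := by
        intro y; simp [hu]; ring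
      have hφyM : ∀ y, ((φ : X →ᵇ ℝ) y)^2 ≤ M^2 := by
        intro y
        have h2 := (φ : X →ᵇ ℝ).norm_coe_le_norm y
        rw [Real.norm_eq_abs] at h2
        nlinarith [sq_abs ((φ : X →ᵇ ℝ) y), abs_nonneg ((φ : X →ᵇ ℝ) y)]
      have hu0 : ∀ y, 0 ≤ (u : X →ᵇ ℝ) y := by
        intro y
        rw [huy y, sub_nonneg, div_le_one (by positivity)]
        exact hφyM y
      have hu1 : ∀ y, (u : X →ᵇ ℝ) y ≤ 1 := by
        intro y
        rw [huy y]
        have : 0 ≤ ((φ : X →ᵇ ℝ) y)^2/M^2 := by positivity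
        linarith
      have huB : ∀ y ∈ B, (u : X →ᵇ ℝ) y ≤ θ := by
        intro y hy
        have hcy : c < |(φ : X →ᵇ ℝ) y| := hy.2
        have : c^2 ≤ ((φ : X →ᵇ ℝ) y)^2 := by
          nlinarith [sq_abs ((φ : X →ᵇ ℝ) y)]
        rw [huy y]
        simp only [hθdef]
        have h4 : c^2/M^2 ≤ ((φ : X →ᵇ ℝ) y)^2/M^2 := by gcongr
        linarith
      set S : ℕ → ↥R := fun k => ∑ j ∈ Finset.range k, u^j with hS
      set hk : ℕ → ↥R := fun k =>
        (⟨const X (1/M^2), hR.const_mem _⟩ : ↥R) * φ * S k * f with hhk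
      have hSval : ∀ k y, ((S k : ↥R) : X →ᵇ ℝ) y
          = ∑ j ∈ Finset.range k, ((u : X →ᵇ ℝ) y)^j := by
        intro k y; simp only [hS]; push_cast; simp
      have hkval : ∀ k y, ((hk k : ↥R) : X →ᵇ ℝ) y
          = 1/M^2 * (φ : X →ᵇ ℝ) y * (((S k : ↥R) : X →ᵇ ℝ) y) * (f : X →ᵇ ℝ) y := by
        intro k y; simp only [hhk]; push_cast; simp
      have hgeom : ∀ k y, (1 - (u : X →ᵇ ℝ) y) * (((S k : ↥R) : X →ᵇ ℝ) y)
          = 1 - ((u : X →ᵇ ℝ) y)^k := by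
        intro k y
        rw [hSval]
        linear_combination - geom_sum_mul ((u : X →ᵇ ℝ) y) k
      have h1u : ∀ y, 1 - (u : X →ᵇ ℝ) y = ((φ : X →ᵇ ℝ) y)^2/M^2 := by
        intro y; rw [huy y]; ring
      have hprod : ∀ k y, ((hk k : ↥R) : X →ᵇ ℝ) y * (φ : X →ᵇ ℝ) y
          = (f : X →ᵇ ℝ) y * (1 - ((u : X →ᵇ ℝ) y)^k) := by
        intro k y
        rw [hkval]
        linear_combination ((f : X →ᵇ ℝ) y) * hgeom k y
          - ((f : X →ᵇ ℝ) y) * (((S k : ↥R) : X →ᵇ ℝ) y) * h1u y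
      have hfdec : ∀ k, f = hk k * φ + f * u^k := by
        intro k
        refine Subtype.ext (BoundedContinuousFunction.ext fun y => ?_)
        have h2 : ((hk k * φ + f * u^k : ↥R) : X →ᵇ ℝ) y
            = ((hk k : ↥R) : X →ᵇ ℝ) y * (φ : X →ᵇ ℝ) y
              + (f : X →ᵇ ℝ) y * ((u : X →ᵇ ℝ) y)^k := by
          push_cast; simp
        show (f : X →ᵇ ℝ) y = _
        rw [h2, hprod k y]; ring
      have hdec : ∀ k, f • v = hk k • (φ • v) + (f * u^k) • v := by
        intro k
        conv_lhs => rw [hfdec k]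
        rw [add_smul, mul_smul]
      have hfy1 : ∀ y, |(f : X →ᵇ ℝ) y| ≤ 1 := by
        intro y
        have h2 := (f : X →ᵇ ℝ).norm_coe_le_norm y
        rw [Real.norm_eq_abs] at h2; linarith
      have htail : ∀ k, ‖((f * u^k : ↥R) : X →ᵇ ℝ)‖ ≤ θ^k := by
        intro k
        refine (BoundedContinuousFunction.norm_le (pow_nonneg hθ0 k)).2 fun y => ?_
        have hval2 : ((f * u^k : ↥R) : X →ᵇ ℝ) y
            = (f : X →ᵇ ℝ) y * ((u : X →ᵇ ℝ) y)^k := by push_cast; simp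
        rw [Real.norm_eq_abs, hval2]
        by_cases hy : (f : X →ᵇ ℝ) y = 0
        · rw [hy]; simp [pow_nonneg hθ0 k]
        · have hyB : y ∈ B := hsupp (subset_closure hy)
          rw [abs_mul, abs_pow, abs_of_nonneg (hu0 y)]
          calc |(f : X →ᵇ ℝ) y| * ((u : X →ᵇ ℝ) y)^k ≤ 1 * θ^k :=
                mul_le_mul (hfy1 y) (pow_le_pow_left₀ (hu0 y) (huB y hyB) k)
                  (pow_nonneg (hu0 y) k) zero_le_one
            _ = θ^k := one_mul _
      have hknorm : ∀ k y, |((hk k : ↥R) : X →ᵇ ℝ) y| ≤ 1/c := by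
        intro k y
        by_cases hy : (f : X →ᵇ ℝ) y = 0
        · rw [hkval k y, hy]
          simp only [mul_zero, abs_zero]
          positivity
        · have hyB : y ∈ B := hsupp (subset_closure hy)
          have hφyc : c < |(φ : X →ᵇ ℝ) y| := hyB.2
          have hpk : 0 ≤ ((u : X →ᵇ ℝ) y)^k := pow_nonneg (hu0 y) k
          have hpk1 : ((u : X →ᵇ ℝ) y)^k ≤ 1 := pow_le_one₀ (hu0 y) (hu1 y)
          have h5 : |((hk k : ↥R) : X →ᵇ ℝ) y| * |(φ : X →ᵇ ℝ) y| ≤ 1 := by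
            rw [← abs_mul, hprod k y, abs_mul]
            calc |(f : X →ᵇ ℝ) y| * |1 - ((u : X →ᵇ ℝ) y)^k| ≤ 1 * 1 :=
                  mul_le_mul (hfy1 y) (abs_le.2 ⟨by linarith, by linarith⟩)
                    (abs_nonneg _) zero_le_one
              _ = 1 := one_mul 1
          rw [le_div_iff₀ hc0]
          calc |((hk k : ↥R) : X →ᵇ ℝ) y| * c
              ≤ |((hk k : ↥R) : X →ᵇ ℝ) y| * |(φ : X →ᵇ ℝ) y| :=
                mul_le_mul_of_nonneg_left hφyc.le (abs_nonneg _)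
            _ ≤ 1 := h5
      have hsupphk : ∀ k, tsupport ⇑((hk k : ↥R) : X →ᵇ ℝ) ⊆ A := by
        intro k
        refine (tsupport_subset_of_zero (f := ⇑((f : X →ᵇ ℝ))) ?_).trans
          (hsupp.trans inter_subset_left)
        intro y hy
        rw [hkval k y, hy]; ring
      have hmain : ∀ k, ‖hk k • (φ • v)‖ ≤ (1/c) * L := by
        intro k
        set g : ↥R := ⟨const X c * ((hk k : ↥R) : X →ᵇ ℝ),
          hR.const_mul_mem _ _ (hk k).2⟩ with hg
        have hgv : g • (φ • v) = c • (hk k • (φ • v)) := rsmul_const_mul hR hconst _ _ _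
        have hgval : ∀ y, (g : X →ᵇ ℝ) y = c * ((hk k : ↥R) : X →ᵇ ℝ) y := by
          intro y; simp [hg]
        have hsuppg : tsupport ⇑((g : X →ᵇ ℝ)) ⊆ A :=
          (tsupport_subset_of_zero (f := ⇑((hk k : ↥R) : X →ᵇ ℝ))
            (fun y hy => by rw [hgval y, hy]; ring)).trans (hsupphk k)
        have hgnorm : ‖(g : X →ᵇ ℝ)‖ ≤ 1 := by
          refine (BoundedContinuousFunction.norm_le zero_le_one).2 fun y => ?_
          rw [Real.norm_eq_abs, hgval y, abs_mul, abs_of_pos hc0]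
          calc c * |((hk k : ↥R) : X →ᵇ ℝ) y| ≤ c * (1/c) :=
                mul_le_mul_of_nonneg_left (hknorm k y) hc0.le
            _ = 1 := by field_simp
        have h6 : ‖g • (φ • v)‖ ≤ L := norm_smul_le_locNorm hnorm g hsuppg hgnorm
        have h7 : ‖g • (φ • v)‖ = c * ‖hk k • (φ • v)‖ := by
          rw [hgv, norm_smul, Real.norm_eq_abs, abs_of_pos hc0]
        have h8 : c * ‖hk k • (φ • v)‖ ≤ L := h7 ▸ h6
        rw [show (1/c) * L = L/c by ring, le_div_iff₀ hc0]
        linarith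
      have hbound : ∀ k : ℕ, ‖f • v‖ ≤ (1/c)*L + θ^k * ‖v‖ := by
        intro k
        rw [hdec k]
        refine (norm_add_le _ _).trans (add_le_add (hmain k) ?_)
        calc ‖(f * u^k) • v‖ ≤ ‖((f * u^k : ↥R) : X →ᵇ ℝ)‖ * ‖v‖ := norm_rsmul_le hnorm _ v
          _ ≤ θ^k * ‖v‖ := mul_le_mul_of_nonneg_right (htail k) (norm_nonneg v)
      have hlim : Tendsto (fun k : ℕ => (1/c)*L + θ^k * ‖v‖) atTop
          (𝓝 ((1/c)*L + 0 * ‖v‖)) :=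
        tendsto_const_nhds.add
          ((tendsto_pow_atTop_nhds_zero_of_lt_one hθ0 hθ1).mul_const _)
      have h9 := ge_of_tendsto hlim (Eventually.of_forall hbound)
      simpa using h9
    have h8 : germNorm R v x ≤ (1/c) * L :=
      (germNorm_le_locNorm hnorm hBopen hxB v).trans hstep
    calc c * germNorm R v x ≤ c * ((1/c) * L) := mul_le_mul_of_nonneg_left h8 hc0.le
      _ = L := by field_simp
  linarith
end
end

section
/- Let X be a Polish space and R ⊆ C_b(X) a subring that approximates open sets. If K ⊆ X is compact, A ⊆ X is open and K ⊆ A, then there exists a function φ ∈ R with values in [0,1] such that φ = 1 on an open neighbourhood of K and supp φ ⊆ A. -/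
open BoundedContinuousFunction Filter Topology Set MeasureTheory ENNReal

noncomputable section

/-- for `K ⊆ A` with `K` compact and `A` open, there is `φ ∈ R` with values
in `[0,1]`, equal to `1` on an open neighbourhood of `K` and with `supp φ ⊆ A`. -/
theorem statement3 {X : Type*} [MetricSpace X] [CompleteSpace X]
    [TopologicalSpace.SeparableSpace X]
    (R : Subring (X →ᵇ ℝ)) (hR : ApproximatesOpenSets R)
    (K A : Set X) (hK : IsCompact K) (hA : IsOpen A) (hKA : K ⊆ A) :
    ∃ φ : X →ᵇ ℝ, φ ∈ R ∧ (∀ x, φ x ∈ Icc (0:ℝ) 1) ∧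
      (∃ U : Set X, IsOpen U ∧ K ⊆ U ∧ ∀ x ∈ U, φ x = 1) ∧ tsupport ⇑φ ⊆ A := by
  obtain ⟨B, hBopen, hKB, hBA⟩ := normal_exists_closure_subset hK.isClosed hA hKA
  obtain ⟨f, hfR, hfmono, hftend⟩ := hR.approx B hBopen
  have hle : ∀ (k : ℕ) (x : X), f k x ≤ B.indicator (fun _ => (1:ℝ)) x := fun k x =>
    Monotone.ge_of_tendsto (hfmono x) (hftend x) k
  -- find N with f N > 3/4 on K
  have hcov : K ⊆ ⋃ k : ℕ, {x | (3/4 : ℝ) < f k x} := by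
    intro x hx
    have h1 : Tendsto (fun k => f k x) atTop (𝓝 (1:ℝ)) := by
      have := hftend x
      rwa [Set.indicator_of_mem (hKB hx)] at this
    have : ∀ᶠ k in atTop, (3/4:ℝ) < f k x :=
      h1.eventually (eventually_gt_nhds (by norm_num))
    obtain ⟨k, hk⟩ := this.exists
    exact Set.mem_iUnion.2 ⟨k, hk⟩
  obtain ⟨t, ht⟩ := hK.elim_finite_subcover (fun k : ℕ => {x | (3/4:ℝ) < f k x})
    (fun k => isOpen_lt continuous_const (f k).continuous) hcov
  set N := t.sup id with hN
  have hKN : ∀ x ∈ K, (3/4:ℝ) < f N x := by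
    intro x hx
    obtain ⟨k, hkt, hk⟩ := Set.mem_iUnion₂.1 (ht hx)
    exact lt_of_lt_of_le hk (hfmono x (Finset.le_sup (f := id) hkt))
  set g := f N with hg
  have hgR : g ∈ R := hfR N
  have hpR : const X 4 * g - const X 2 ∈ R :=
    R.sub_mem (hR.const_mul_mem 4 g hgR) (hR.const_mem 2)
  obtain ⟨q, hqR, hq⟩ := hR.sup_mem _ (const X 0) hpR (hR.const_mem 0)
  obtain ⟨φ, hφR, hφ⟩ := hR.inf_mem q (const X 1) hqR (hR.const_mem 1)
  have hφval : ∀ x, φ x = min (max (4 * g x - 2) 0) 1 := by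
    intro x
    rw [hφ x, hq x]
    simp [BoundedContinuousFunction.coe_sub, BoundedContinuousFunction.coe_mul]
  refine ⟨φ, hφR, ?_, ⟨{x | (3/4:ℝ) < g x}, isOpen_lt continuous_const g.continuous,
    hKN, ?_⟩, ?_⟩
  · intro x
    rw [hφval x]
    constructor
    · exact le_min (le_max_right _ _) zero_le_one
    · exact min_le_right _ _
  · intro x hx
    rw [hφval x]
    have h1 : (1:ℝ) ≤ 4 * g x - 2 := by
      have : (3/4:ℝ) < g x := hx
      linarith
    rw [max_eq_left (le_trans zero_le_one h1), min_eq_right h1]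
  · refine (closure_minimal ?_ (isClosed_closure (s := B))).trans hBA
    intro x hx
    have hx' : φ x ≠ 0 := hx
    rw [hφval x] at hx'
    have hgx : (1/2:ℝ) < g x := by
      by_contra h
      push_neg at h
      have : max (4 * g x - 2) 0 = 0 := max_eq_right (by linarith)
      simp [this] at hx'
    have := hle N x
    by_contra hxB
    rw [Set.indicator_of_notMem (fun h => hxB (subset_closure h))] at this
    exact absurd (lt_of_lt_of_le (by linarith : (0:ℝ) < g x) this) (lt_irrefl 0)
end
end

section
/- Let X be a Polish space, R ⊆ C_b(X) a subring that approximates open sets and V a normed R-module. If {N_n} is a sequence of local vector measures on V that is Cauchy for the norm N ↦ |N|(X), i.e. |N_n − N_m|(X) → 0 as n, m → ∞, then there exists a local vector measure N on V with |N_n − N|(X) → 0. In other words, the space of local vector measures on V equipped with the norm N ↦ |N|(X) is a Banach space. -/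
open BoundedContinuousFunction Filter Topology Set MeasureTheory ENNReal

noncomputable section

/-- Any finite disjoint measurable family's sum of norms is bounded by total variation. -/
lemma sum_nnnorm_le_totalVar {X : Type*} [MeasurableSpace X] {E : Type*}
    [NormedAddCommGroup E] (D : Set X → E) {p : ℕ} (A : Fin p → Set X)
    (hA : ∀ i, MeasurableSet (A i)) (hd : Pairwise (Function.onFun Disjoint A)) :
    ∑ i, (‖D (A i)‖₊ : ℝ≥0∞) ≤ totalVar D Set.univ := by
  set A' : Fin (p + 1) → Set X := Fin.snoc A ((⋃ i, A i)ᶜ) with hA'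
  have hlast : A' (Fin.last p) = (⋃ i, A i)ᶜ := Fin.snoc_last _ _
  have hcast : ∀ i : Fin p, A' i.castSucc = A i := fun i => Fin.snoc_castSucc _ _ _
  have hmeas : ∀ i, MeasurableSet (A' i) := by
    intro i
    induction i using Fin.lastCases with
    | last => rw [hlast]; exact (MeasurableSet.iUnion fun i => hA i).compl
    | cast i' => rw [hcast]; exact hA i'
  have key : ∀ j' : Fin p, Disjoint (A' (Fin.last p)) (A' j'.castSucc) := by
    intro j'
    rw [hlast, hcast]
    exact disjoint_compl_left.mono_right (subset_iUnion A j')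
  have hdisj : Pairwise (Function.onFun Disjoint A') := by
    intro i j hij
    induction i using Fin.lastCases with
    | last =>
      induction j using Fin.lastCases with
      | last => exact absurd rfl hij
      | cast j' => exact key j'
    | cast i' =>
      induction j using Fin.lastCases with
      | last => exact (key i').symm
      | cast j' =>
        have : Disjoint (A i') (A j') := hd fun h => hij (by rw [h])
        simpa [Function.onFun, hcast] using this
  have hunion : (⋃ i, A' i) = Set.univ := by
    rw [Set.eq_univ_iff_forall]
    intro x
    by_cases hx : x ∈ ⋃ i, A i
    · obtain ⟨i, hi⟩ := Set.mem_iUnion.mp hx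
      exact Set.mem_iUnion.2 ⟨i.castSucc, by rw [hcast]; exact hi⟩
    · exact Set.mem_iUnion.2 ⟨Fin.last p, by rw [hlast]; exact hx⟩
  have hsum : ∑ i, (‖D (A i)‖₊ : ℝ≥0∞) ≤ ∑ i, (‖D (A' i)‖₊ : ℝ≥0∞) := by
    rw [Fin.sum_univ_castSucc]
    refine le_trans (le_of_eq ?_) le_self_add
    exact Finset.sum_congr rfl fun i _ => by rw [hcast]
  refine hsum.trans ?_
  exact le_iSup_of_le (p + 1) (le_iSup_of_le A'
    (le_iSup_of_le ⟨hmeas, hdisj, hunion⟩ le_rfl))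

/-- Real version of the previous bound. -/
lemma sum_norm_le_of_totalVar_le {X : Type*} [MeasurableSpace X] {E : Type*}
    [NormedAddCommGroup E] (D : Set X → E) {p : ℕ} (A : Fin p → Set X)
    (hA : ∀ i, MeasurableSet (A i)) (hd : Pairwise (Function.onFun Disjoint A)) {c : ℝ} (hc : 0 ≤ c)
    (h : totalVar D Set.univ ≤ ENNReal.ofReal c) : ∑ i, ‖D (A i)‖ ≤ c := by
  have h1 := (sum_nnnorm_le_totalVar D A hA hd).trans h
  have h2 := ENNReal.toReal_mono ENNReal.ofReal_ne_top h1
  rw [ENNReal.toReal_ofReal hc] at h2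
  have h3 : (∑ i, (‖D (A i)‖₊ : ℝ≥0∞)).toReal = ∑ i, ‖D (A i)‖ := by
    rw [ENNReal.toReal_sum (by intro a _; exact ENNReal.coe_ne_top)]
    simp
  rwa [h3] at h2

/-- the space of local vector measures on `V` with the norm `N ↦ |N|(X)`
is complete: every Cauchy sequence converges. -/
theorem statement6 {X : Type*} [MetricSpace X] [CompleteSpace X]
    [TopologicalSpace.SeparableSpace X] [MeasurableSpace X] [BorelSpace X]
    {V : Type*} [NormedAddCommGroup V] [NormedSpace ℝ V]
    (R : Subring (X →ᵇ ℝ)) [Module R V]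
    (hR : ApproximatesOpenSets R) (hconst : ConstSMulCompat R V) (hnorm : NormSMulCompat R V)
    (N : ℕ → Set X → V →L[ℝ] ℝ) (hN : ∀ n, IsLocalVectorMeasure R (N n))
    (hcauchy : ∀ ε : ℝ≥0∞, 0 < ε → ∃ n₀ : ℕ, ∀ n ≥ n₀, ∀ m ≥ n₀,
      totalVar (fun B => N n B - N m B) Set.univ < ε) :
    ∃ M : Set X → V →L[ℝ] ℝ, IsLocalVectorMeasure R M ∧
      Tendsto (fun n => totalVar (fun B => N n B - M B) Set.univ) atTop (𝓝 0) := by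
  classical
  -- single-set bound
  have hsingle : ∀ (D : Set X → V →L[ℝ] ℝ) (B : Set X), MeasurableSet B →
      (‖D B‖₊ : ℝ≥0∞) ≤ totalVar D Set.univ := by
    intro D B hB
    have := sum_nnnorm_le_totalVar D (fun _ : Fin 1 => B) (fun _ => hB)
      (Subsingleton.pairwise)
    simpa using this
  -- pointwise Cauchy, hence pointwise limits
  have hexists : ∀ B : Set X, ∃ L : V →L[ℝ] ℝ,
      MeasurableSet B → Tendsto (fun n => N n B) atTop (𝓝 L) := by
    intro B
    by_cases hB : MeasurableSet B
    · have hc : CauchySeq fun n => N n B := by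
        rw [Metric.cauchySeq_iff']
        intro ε hε
        obtain ⟨n₀, hn₀⟩ := hcauchy (ENNReal.ofReal ε) (by simpa using hε)
        refine ⟨n₀, fun n hn => ?_⟩
        have h1 := (hsingle (fun C => N n C - N n₀ C) B hB).trans_lt
          (hn₀ n hn n₀ le_rfl)
        rw [dist_eq_norm]
        have h2 : (‖N n B - N n₀ B‖₊ : ℝ≥0∞) < ENNReal.ofReal ε := h1
        rw [ENNReal.ofReal, ENNReal.coe_lt_coe] at h2
        have := (Real.lt_toNNReal_iff_coe_lt.mp ?_ : (‖N n B - N n₀ B‖₊ : ℝ) < ε)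
        · simpa using this
        · exact h2
      obtain ⟨L, hL⟩ := cauchySeq_tendsto_of_complete hc
      exact ⟨L, fun _ => hL⟩
    · exact ⟨0, fun h => absurd h hB⟩
  choose M hM using hexists
  -- evaluation limits
  have happly : ∀ (B : Set X), MeasurableSet B → ∀ v : V,
      Tendsto (fun n => N n B v) atTop (𝓝 (M B v)) := by
    intro B hB v
    have h := hM B hB
    have hcont : Continuous fun G : V →L[ℝ] ℝ => G v :=
      (ContinuousLinearMap.apply ℝ ℝ v).continuous
    exact (hcont.tendsto (M B)).comp h
  -- convergence in total variation
  have hconv : ∀ ε : ℝ≥0∞, 0 < ε → ∃ n₀ : ℕ, ∀ n ≥ n₀,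
      totalVar (fun B => N n B - M B) Set.univ ≤ ε := by
    intro ε hε
    obtain ⟨n₀, hn₀⟩ := hcauchy ε hε
    refine ⟨n₀, fun n hn => ?_⟩
    refine iSup_le fun p => iSup_le fun A => iSup_le fun hc => ?_
    obtain ⟨hAm, hAd, -⟩ := hc
    have hterm : ∀ i : Fin p,
        Tendsto (fun m => (‖N n (A i) - N m (A i)‖₊ : ℝ≥0∞)) atTop
          (𝓝 (‖N n (A i) - M (A i)‖₊ : ℝ≥0∞)) := by
      intro i
      exact ENNReal.tendsto_coe.mpr (tendsto_const_nhds.sub (hM (A i) (hAm i))).nnnorm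
    have hsum := tendsto_finset_sum Finset.univ (fun i _ => hterm i)
    refine le_of_tendsto hsum ?_
    filter_upwards [eventually_ge_atTop n₀] with m hm
    exact le_of_lt ((sum_nnnorm_le_totalVar (fun B => N n B - N m B) A hAm hAd).trans_lt
      (hn₀ n hn m hm))
  -- real-valued finite-family bound
  have hrconv : ∀ ε : ℝ, 0 < ε → ∃ n₀ : ℕ, ∀ n ≥ n₀, ∀ (p : ℕ) (A : Fin p → Set X),
      (∀ i, MeasurableSet (A i)) → Pairwise (Function.onFun Disjoint A) →
      ∑ i, ‖N n (A i) - M (A i)‖ ≤ ε := by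
    intro ε hε
    obtain ⟨n₀, hn₀⟩ := hconv (ENNReal.ofReal ε) (by simpa using hε)
    exact ⟨n₀, fun n hn p A hAm hAd =>
      sum_norm_le_of_totalVar_le _ A hAm hAd hε.le (hn₀ n hn)⟩
  refine ⟨M, ⟨?_, ?_⟩, ?_⟩
  · -- σ-additivity
    intro A hAm hAd
    have hU : MeasurableSet (⋃ k, A k) := MeasurableSet.iUnion hAm
    rw [Metric.tendsto_atTop]
    intro ε hε
    obtain ⟨n₀, hn₀⟩ := hrconv (ε / 4) (by linarith)
    -- bounds with n := n₀
    have hpart : ∀ p : ℕ,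
        ‖∑ k ∈ Finset.range p, (N n₀ (A k) - M (A k))‖ ≤ ε / 4 := by
      intro p
      have h1 : ∑ i : Fin p, ‖N n₀ (A i.val) - M (A i.val)‖ ≤ ε / 4 :=
        hn₀ n₀ le_rfl p (fun i : Fin p => A i.val) (fun i => hAm i.val)
          (fun i j hij => hAd (Fin.val_injective.ne hij))
      calc ‖∑ k ∈ Finset.range p, (N n₀ (A k) - M (A k))‖
          ≤ ∑ k ∈ Finset.range p, ‖N n₀ (A k) - M (A k)‖ := norm_sum_le _ _
        _ = ∑ i : Fin p, ‖N n₀ (A i.val) - M (A i.val)‖ := (Finset.sum_range _)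
        _ ≤ ε / 4 := h1
    have hUb : ‖N n₀ (⋃ k, A k) - M (⋃ k, A k)‖ ≤ ε / 4 := by
      have h1 : ∑ i : Fin 1, ‖N n₀ ((fun _ : Fin 1 => ⋃ k, A k) i) -
          M ((fun _ : Fin 1 => ⋃ k, A k) i)‖ ≤ ε / 4 :=
        hn₀ n₀ le_rfl 1 _ (fun _ => hU) Subsingleton.pairwise
      simpa using h1
    have hσ := (hN n₀).sigma_additive A hAm hAd
    rw [Metric.tendsto_atTop] at hσ
    obtain ⟨P, hP⟩ := hσ (ε / 4) (by linarith)
    refine ⟨P, fun p hp => ?_⟩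
    have h3 := hP p hp
    rw [dist_eq_norm] at h3 ⊢
    have hdecomp : ∑ k ∈ Finset.range p, M (A k) - M (⋃ k, A k) =
        -(∑ k ∈ Finset.range p, (N n₀ (A k) - M (A k))) +
        (∑ k ∈ Finset.range p, N n₀ (A k) - N n₀ (⋃ k, A k)) +
        (N n₀ (⋃ k, A k) - M (⋃ k, A k)) := by
      rw [Finset.sum_sub_distrib]
      abel
    rw [hdecomp]
    calc ‖_ + _ + _‖ ≤ ‖-(∑ k ∈ Finset.range p, (N n₀ (A k) - M (A k))) +
          (∑ k ∈ Finset.range p, N n₀ (A k) - N n₀ (⋃ k, A k))‖ +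
          ‖N n₀ (⋃ k, A k) - M (⋃ k, A k)‖ := norm_add_le _ _
      _ ≤ ‖-(∑ k ∈ Finset.range p, (N n₀ (A k) - M (A k)))‖ +
          ‖∑ k ∈ Finset.range p, N n₀ (A k) - N n₀ (⋃ k, A k)‖ +
          ‖N n₀ (⋃ k, A k) - M (⋃ k, A k)‖ := by
            gcongr; exact norm_add_le _ _
      _ < ε / 4 + ε / 4 + ε / 4 := by
          rw [norm_neg]
          exact add_lt_add_of_lt_of_le (add_lt_add_of_le_of_lt (hpart p) h3) hUb
      _ < ε := by linarith
  · -- weak locality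
    intro A hA v h0
    have hAm : MeasurableSet A := hA.measurableSet
    have h1 : Tendsto (fun n => N n A v) atTop (𝓝 (M A v)) := happly A hAm v
    have h2 : (fun n => N n A v) = fun _ => (0 : ℝ) := by
      funext n; exact (hN n).weakly_local A hA v h0
    rw [h2] at h1
    exact (tendsto_nhds_unique tendsto_const_nhds h1).symm
  · -- convergence in total variation
    rw [ENNReal.tendsto_atTop_zero]
    intro ε hε
    exact hconv ε hε
end
end

section
/- Let X be a Polish space, R ⊆ C_b(X) a subring that approximates open sets, V a normed R-module and N a local vector measure on V. Then for every f ∈ R, v ∈ V and every Borel set B ⊆ X one has N(B)(f v) = ∫_B f d(v·N), where v·N is the finite signed Borel measure B ↦ N(B)(v). Equivalently, (f v)·N = f (v·N) as signed measures. -/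
open BoundedContinuousFunction Filter Topology Set MeasureTheory ENNReal

noncomputable section

namespace SigmaAdditive

variable {X : Type*} [MeasurableSpace X] {E : Type*} [NormedAddCommGroup E]
  {N : Set X → E}

lemma empty' (h : SigmaAdditive N) : N ∅ = 0 := by
  have h0 := h (fun _ => (∅ : Set X)) (fun _ => MeasurableSet.empty)
    (fun i j _ => by simp [Function.onFun])
  simp only [Set.iUnion_empty] at h0
  have h1 : Tendsto (fun n : ℕ =>
      (∑ k ∈ Finset.range (n + 1), N ∅) - ∑ k ∈ Finset.range n, N ∅) atTop
      (𝓝 (N ∅ - N ∅)) :=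
    (h0.comp (tendsto_add_atTop_nat 1)).sub h0
  have h2 : (fun n : ℕ =>
      (∑ k ∈ Finset.range (n + 1), N ∅) - ∑ k ∈ Finset.range n, N ∅) = fun _ => N ∅ := by
    funext n; rw [Finset.sum_range_succ]; abel
  rw [h2, sub_self] at h1
  exact tendsto_nhds_unique tendsto_const_nhds h1

lemma finadd (h : SigmaAdditive N) (B : ℕ → Set X)
    (hB : ∀ k, MeasurableSet (B k)) (hd : Pairwise (Function.onFun Disjoint B)) (m : ℕ) :
    N (⋃ k ∈ Finset.range m, B k) = ∑ k ∈ Finset.range m, N (B k) := by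
  set A : ℕ → Set X := fun k => if k < m then B k else ∅ with hA
  have hmeas : ∀ k, MeasurableSet (A k) := fun k => by
    by_cases h' : k < m <;> simp [hA, h', hB k]
  have hdisj : Pairwise (Function.onFun Disjoint A) := by
    intro i j hij
    by_cases hi : i < m <;> by_cases hj : j < m <;>
      simp [hA, Function.onFun, hi, hj]
    exact hd hij
  have hU : (⋃ k, A k) = ⋃ k ∈ Finset.range m, B k := by
    ext x
    simp only [mem_iUnion, Finset.mem_range, hA]
    constructor
    · rintro ⟨i, hx⟩
      by_cases hi : i < m
      · exact ⟨i, hi, by simpa [hi] using hx⟩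
      · simp [hi] at hx
    · rintro ⟨i, hi, hx⟩
      exact ⟨i, by simp [hi, hx]⟩
  have ht := h A hmeas hdisj
  rw [hU] at ht
  have hev : ∀ n : ℕ, (∑ k ∈ Finset.range (n + m), N (A k)) = ∑ k ∈ Finset.range m, N (B k) := by
    intro n
    induction n with
    | zero =>
      simp only [Nat.zero_add]
      exact Finset.sum_congr rfl fun k hk => by
        simp [hA, Finset.mem_range.mp hk]
    | succ n ih =>
      have : n + 1 + m = (n + m) + 1 := by omega
      rw [this, Finset.sum_range_succ, ih]
      have : A (n + m) = ∅ := by simp [hA]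
      rw [this, h.empty', add_zero]
  have ht2 : Tendsto (fun n : ℕ => ∑ k ∈ Finset.range (n + m), N (A k)) atTop
      (𝓝 (N (⋃ k ∈ Finset.range m, B k))) := ht.comp (tendsto_add_atTop_nat m)
  rw [funext hev] at ht2
  exact (tendsto_nhds_unique ht2 tendsto_const_nhds)

lemma finsetAdd (h : SigmaAdditive N) (B : ℕ → Set X)
    (hB : ∀ k, MeasurableSet (B k)) (hd : Pairwise (Function.onFun Disjoint B)) (s : Finset ℕ) :
    N (⋃ k ∈ s, B k) = ∑ k ∈ s, N (B k) := by
  classical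
  set B' : ℕ → Set X := fun k => if k ∈ s then B k else ∅ with hB'
  obtain ⟨m, hm⟩ : ∃ m, ∀ k ∈ s, k < m := ⟨(s.sup id) + 1, fun k hk =>
    Nat.lt_succ_of_le (Finset.le_sup (f := id) hk)⟩
  have h1 : N (⋃ k ∈ Finset.range m, B' k) = ∑ k ∈ Finset.range m, N (B' k) := by
    refine h.finadd B' (fun k => ?_) ?_ m
    · by_cases hk : k ∈ s <;> simp [hB', hk, hB k]
    · intro i j hij
      by_cases hi : i ∈ s <;> by_cases hj : j ∈ s <;>
        simp [hB', Function.onFun, hi, hj]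
      exact hd hij
  have h2 : (⋃ k ∈ Finset.range m, B' k) = ⋃ k ∈ s, B k := by
    ext x
    simp only [mem_iUnion, Finset.mem_range, hB']
    constructor
    · rintro ⟨i, hi, hx⟩
      by_cases his : i ∈ s
      · exact ⟨i, his, by simpa [his] using hx⟩
      · simp [his] at hx
    · rintro ⟨i, hi, hx⟩
      exact ⟨i, hm i hi, by simp [hi, hx]⟩
  have h3 : ∑ k ∈ Finset.range m, N (B' k) = ∑ k ∈ s, N (B k) := by
    rw [Finset.sum_congr rfl (fun k _ => show N (B' k) = if k ∈ s then N (B k) else 0 by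
      by_cases hk : k ∈ s <;> simp [hB', hk, h.empty'])]
    rw [Finset.sum_ite_mem (Finset.range m) s (fun k => N (B k))]
    congr 1
    exact Finset.inter_eq_right.mpr (fun k hk => Finset.mem_range.mpr (hm k hk))
  rw [← h2, h1, h3]

end SigmaAdditive
namespace SigmaAdditive

variable {X : Type*} [MeasurableSpace X] {E : Type*} [NormedAddCommGroup E]
  {N : Set X → E}

lemma add2 (h : SigmaAdditive N) {D D' : Set X}
    (hD : MeasurableSet D) (hD' : MeasurableSet D') (hdisj : Disjoint D D') :
    N (D ∪ D') = N D + N D' := by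
  classical
  set B : ℕ → Set X := fun k => match k with | 0 => D | 1 => D' | _ => ∅ with hB
  have h1 := h.finsetAdd B (fun k => by
      rcases k with _ | _ | k
      · exact hD
      · exact hD'
      · exact MeasurableSet.empty) (by
      intro i j hij
      rcases i with _ | _ | i <;> rcases j with _ | _ | j <;>
        first
          | exact absurd rfl hij
          | exact hdisj
          | exact hdisj.symm
          | exact Set.empty_disjoint _
          | exact (Set.empty_disjoint _).symm) {0, 1}
  have h2 : (⋃ k ∈ ({0, 1} : Finset ℕ), B k) = D ∪ D' := by
    show (⋃ k ∈ ({0, 1} : Finset ℕ), B k) = D ∪ D'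
    rw [show ({0, 1} : Finset ℕ) = insert 0 {1} from rfl]
    rw [Finset.set_biUnion_insert]
    simp [hB]
  have h3 : ∑ k ∈ ({0, 1} : Finset ℕ), N (B k) = N D + N D' := by
    rw [Finset.sum_pair (by norm_num)]
    rfl
  rw [← h2, h1, h3]

lemma diff (h : SigmaAdditive N) {D F : Set X}
    (hD : MeasurableSet D) (hF : MeasurableSet F) (hsub : F ⊆ D) :
    N (D \ F) = N D - N F := by
  have h1 : N (F ∪ (D \ F)) = N F + N (D \ F) :=
    h.add2 hF (hD.diff hF) disjoint_sdiff_right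
  rw [Set.union_diff_cancel hsub] at h1
  rw [eq_sub_iff_add_eq, add_comm, ← h1]

lemma exists_bound (h : SigmaAdditive N) :
    ∃ M : ℝ, 0 ≤ M ∧ ∀ D, MeasurableSet D → ‖N D‖ ≤ M := by
  classical
  by_contra hc
  push_neg at hc
  have hc' : ∀ M : ℝ, ∃ D, MeasurableSet D ∧ M < ‖N D‖ := by
    intro M
    rcases hc (max M 0) (le_max_right _ _) with ⟨D, hD, hMD⟩
    exact ⟨D, hD, lt_of_le_of_lt (le_max_left _ _) hMD⟩
  set Unb : Set X → Prop := fun E' => MeasurableSet E' ∧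
    ∀ M : ℝ, ∃ F, MeasurableSet F ∧ F ⊆ E' ∧ M < ‖N F‖ with hUnb
  have hstep : ∀ E', Unb E' → ∃ F, (MeasurableSet F ∧ F ⊆ E' ∧ 1 ≤ ‖N F‖) ∧ Unb (E' \ F) := by
    intro E' hE'
    obtain ⟨F', hF'm, hF'sub, hF'n⟩ := hE'.2 (1 + ‖N E'‖)
    by_cases hcase : Unb (E' \ F')
    · exact ⟨F', ⟨hF'm, hF'sub, by linarith [norm_nonneg (N E')]⟩, hcase⟩
    · -- E' \ F' is "bounded"; then F' is unbounded
      have hbd : ∃ M₀ : ℝ, ∀ G, MeasurableSet G → G ⊆ E' \ F' → ‖N G‖ ≤ M₀ := by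
        simp only [hUnb, not_and, not_forall, not_exists, not_lt] at hcase
        obtain ⟨M₀, hM₀⟩ := hcase ((hE'.1).diff hF'm)
        exact ⟨M₀, fun G hG hGsub => hM₀ G hG hGsub⟩
      obtain ⟨M₀, hM₀⟩ := hbd
      have hUnbF' : Unb F' := by
        refine ⟨hF'm, fun M => ?_⟩
        obtain ⟨G, hGm, hGsub, hGn⟩ := hE'.2 (M + M₀)
        refine ⟨G ∩ F', hGm.inter hF'm, Set.inter_subset_right, ?_⟩
        have hsplit : N G = N (G ∩ F') + N (G \ F') := by
          have : N ((G ∩ F') ∪ (G \ F')) = N (G ∩ F') + N (G \ F') :=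
            h.add2 (hGm.inter hF'm) (hGm.diff hF'm)
              (Set.disjoint_of_subset_left Set.inter_subset_right disjoint_sdiff_right)
          rwa [Set.inter_union_diff] at this
        have h2 : ‖N (G \ F')‖ ≤ M₀ := hM₀ _ (hGm.diff hF'm)
          (fun x hx => ⟨hGsub hx.1, hx.2⟩)
        have : ‖N G‖ ≤ ‖N (G ∩ F')‖ + ‖N (G \ F')‖ := hsplit ▸ norm_add_le _ _
        linarith
      refine ⟨E' \ F', ⟨(hE'.1).diff hF'm, Set.diff_subset, ?_⟩, ?_⟩
      · have := h.diff hE'.1 hF'm hF'sub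
        have h2 : ‖N (E' \ F')‖ ≥ ‖N F'‖ - ‖N E'‖ := by
          rw [this]
          have := norm_sub_norm_le (N E') (N F')
          have h3 : ‖N E' - N F'‖ = ‖N F' - N E'‖ := norm_sub_rev _ _
          linarith [norm_sub_norm_le (N F') (N E')]
        linarith
      · have : E' \ (E' \ F') = F' := by
          rw [Set.diff_diff_right_self, Set.inter_eq_right.mpr hF'sub]
        rw [this]
        exact hUnbF'
  choose Fc hFc using hstep
  have hUnb_univ : Unb Set.univ := by
    refine ⟨MeasurableSet.univ, fun M => ?_⟩
    obtain ⟨D, hD, hDn⟩ := hc' M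
    exact ⟨D, hD, Set.subset_univ D, hDn⟩
  let T : ℕ → {E' : Set X // Unb E'} := fun n =>
    Nat.rec ⟨Set.univ, hUnb_univ⟩ (fun _ p => ⟨p.1 \ Fc p.1 p.2, (hFc p.1 p.2).2⟩) n
  have hTsucc : ∀ n, (T (n + 1)).1 = (T n).1 \ Fc (T n).1 (T n).2 := fun n => rfl
  set FF : ℕ → Set X := fun n => Fc (T n).1 (T n).2 with hFF
  have hFFm : ∀ n, MeasurableSet (FF n) := fun n => (hFc (T n).1 (T n).2).1.1
  have hFFsub : ∀ n, FF n ⊆ (T n).1 := fun n => (hFc (T n).1 (T n).2).1.2.1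
  have hFFn : ∀ n, 1 ≤ ‖N (FF n)‖ := fun n => (hFc (T n).1 (T n).2).1.2.2
  have hmono : ∀ n k, (T (n + k)).1 ⊆ (T n).1 := by
    intro n k
    induction k with
    | zero => exact subset_rfl
    | succ k ih =>
      rw [show n + (k+1) = (n+k) + 1 by omega, hTsucc]
      exact Set.diff_subset.trans ih
  have hdisj : Pairwise (Function.onFun Disjoint FF) := by
    have key : ∀ m n, m < n → Disjoint (FF m) (FF n) := by
      intro m n hmn
      have h1 : FF n ⊆ (T (m + 1)).1 := by
        have : (T n).1 ⊆ (T (m+1)).1 := by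
          have := hmono (m+1) (n - (m+1))
          rwa [show m + 1 + (n - (m+1)) = n by omega] at this
        exact (hFFsub n).trans this
      rw [hTsucc m] at h1
      exact Set.disjoint_left.mpr fun x hx hx' => (h1 hx').2 hx
    intro m n hmn
    rcases lt_or_gt_of_ne hmn with h' | h'
    · exact key m n h'
    · exact (key n m h').symm
  have ht := h FF hFFm hdisj
  have hcauchy : Tendsto (fun n => N (FF n)) atTop (𝓝 0) := by
    have h1 : Tendsto (fun n : ℕ =>
        (∑ k ∈ Finset.range (n + 1), N (FF k)) - ∑ k ∈ Finset.range n, N (FF k)) atTop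
        (𝓝 (N (⋃ k, FF k) - N (⋃ k, FF k))) :=
      (ht.comp (tendsto_add_atTop_nat 1)).sub ht
    rw [sub_self] at h1
    refine h1.congr fun n => ?_
    rw [Finset.sum_range_succ]; abel
  have hnorm0 : Tendsto (fun n => ‖N (FF n)‖) atTop (𝓝 0) := by
    simpa using hcauchy.norm
  have hlt : ∀ᶠ n in atTop, ‖N (FF n)‖ < 1 :=
    hnorm0.eventually (eventually_lt_nhds (show (0:ℝ) < 1 by norm_num))
  obtain ⟨n, hn⟩ := hlt.exists
  linarith [hFFn n]

end SigmaAdditive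
section LocNorm

variable {X : Type*} [TopologicalSpace X] (R : Subring (X →ᵇ ℝ)) {V : Type*}
  [NormedAddCommGroup V] [Module R V]

lemma norm_smul_le_of (hnorm : NormSMulCompat R V) (g : ↥R) (w : V) :
    ‖g • w‖ ≤ ‖(g : X →ᵇ ℝ)‖ * ‖w‖ := by
  have := hnorm {0} (fun _ => g) (fun _ => w) ‖(g : X →ᵇ ℝ)‖ ‖w‖ (norm_nonneg _)
    (norm_nonneg _) (by simp) (fun i _ => le_refl _) (fun i _ => le_refl _)
  simpa using this

lemma locNorm_eq_zero_iff (hnorm : NormSMulCompat R V) (A : Set X) (w : V) :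
    locNorm R A w = 0 ↔
      ∀ g : ↥R, tsupport ⇑((g : X →ᵇ ℝ)) ⊆ A → ‖(g : X →ᵇ ℝ)‖ ≤ 1 → g • w = 0 := by
  have h0 : (0:ℝ) ∈ {r : ℝ | ∃ f : ↥R,
      tsupport ⇑((f : X →ᵇ ℝ)) ⊆ A ∧ ‖(f : X →ᵇ ℝ)‖ ≤ 1 ∧ r = ‖f • w‖} := by
    refine ⟨0, ?_, by simp, ?_⟩
    · have h1 : tsupport ⇑(((0 : ↥R) : X →ᵇ ℝ)) = ∅ := by
        rw [tsupport_eq_empty_iff]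
        rfl
      rw [h1]
      exact Set.empty_subset A
    · rw [zero_smul]; simp
  have hbdd : BddAbove {r : ℝ | ∃ f : ↥R,
      tsupport ⇑((f : X →ᵇ ℝ)) ⊆ A ∧ ‖(f : X →ᵇ ℝ)‖ ≤ 1 ∧ r = ‖f • w‖} := by
    refine ⟨‖w‖, ?_⟩
    rintro r ⟨g, hsupp, hle, rfl⟩
    calc ‖g • w‖ ≤ ‖(g : X →ᵇ ℝ)‖ * ‖w‖ := norm_smul_le_of R hnorm g w
      _ ≤ 1 * ‖w‖ := by gcongr
      _ = ‖w‖ := one_mul _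
  constructor
  · intro hz g hsupp hle
    have hmem : ‖g • w‖ ∈ {r : ℝ | ∃ f : ↥R,
        tsupport ⇑((f : X →ᵇ ℝ)) ⊆ A ∧ ‖(f : X →ᵇ ℝ)‖ ≤ 1 ∧ r = ‖f • w‖} :=
      ⟨g, hsupp, hle, rfl⟩
    have := le_csSup hbdd hmem
    rw [show sSup {r : ℝ | ∃ f : ↥R,
        tsupport ⇑((f : X →ᵇ ℝ)) ⊆ A ∧ ‖(f : X →ᵇ ℝ)‖ ≤ 1 ∧ r = ‖f • w‖} = locNorm R A w
      from rfl, hz] at this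
    exact norm_le_zero_iff.mp this
  · intro hg
    have hset : {r : ℝ | ∃ f : ↥R,
        tsupport ⇑((f : X →ᵇ ℝ)) ⊆ A ∧ ‖(f : X →ᵇ ℝ)‖ ≤ 1 ∧ r = ‖f • w‖} = {0} := by
      refine Set.eq_singleton_iff_unique_mem.mpr ⟨h0, ?_⟩
      rintro r ⟨g, h1, h2, rfl⟩
      rw [hg g h1 h2]
      simp
    show sSup _ = 0
    rw [hset, csSup_singleton]

end LocNorm

section BorelLocality

variable {X : Type*} [MetricSpace X] [MeasurableSpace X] [BorelSpace X]
  (R : Subring (X →ᵇ ℝ)) {V : Type*} [NormedAddCommGroup V] [NormedSpace ℝ V] [Module R V]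

lemma tendsto_clm_apply {S : ℕ → V →L[ℝ] ℝ} {T : V →L[ℝ] ℝ}
    (h : Tendsto S atTop (𝓝 T)) (w : V) :
    Tendsto (fun n => S n w) atTop (𝓝 (T w)) := by
  rw [tendsto_iff_norm_sub_tendsto_zero] at h ⊢
  refine squeeze_zero (fun n => norm_nonneg _) (fun n => ?_) (by
    simpa using h.mul_const ‖w‖)
  calc ‖S n w - T w‖ = ‖(S n - T) w‖ := by simp
    _ ≤ ‖S n - T‖ * ‖w‖ := (S n - T).le_opNorm w

lemma N_zero_of_locNorm_zero (hnorm : NormSMulCompat R V)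
    (N : Set X → V →L[ℝ] ℝ) (hN : IsLocalVectorMeasure R N)
    {A : Set X} (hA : IsOpen A) (w : V) (hzero : locNorm R A w = 0) :
    ∀ D : Set X, MeasurableSet D → D ⊆ A → N D w = 0 := by
  have key : ∀ ⦃D : Set X⦄, MeasurableSet D → N (D ∩ A) w = 0 := by
    refine MeasurableSet.induction_on_open (fun U hU => ?_) (fun t ht hts => ?_)
      (fun g hdis hmeas hg => ?_)
    · -- open
      apply hN.weakly_local _ (hU.inter hA)
      rw [locNorm_eq_zero_iff R hnorm] at hzero ⊢
      exact fun g h1 h2 => hzero g (h1.trans Set.inter_subset_right) h2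
    · -- compl
      have hAw : N A w = 0 := hN.weakly_local A hA w hzero
      have hset : tᶜ ∩ A = A \ (t ∩ A) := by
        ext x; simp only [Set.mem_inter_iff, Set.mem_compl_iff, Set.mem_diff]; tauto
      have hdiff := hN.sigma_additive.diff (hA.measurableSet) (ht.inter hA.measurableSet)
        Set.inter_subset_right
      rw [hset, hdiff]
      simp [hAw, hts]
    · -- union
      have hset : (⋃ i, g i) ∩ A = ⋃ i, (g i ∩ A) := by
        rw [Set.iUnion_inter]
      rw [hset]
      have hm : ∀ i, MeasurableSet (g i ∩ A) := fun i => (hmeas i).inter hA.measurableSet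
      have hd : Pairwise (Function.onFun Disjoint fun i => g i ∩ A) := fun i j hij =>
        (hdis hij).mono Set.inter_subset_left Set.inter_subset_left
      have ht2 := tendsto_clm_apply (hN.sigma_additive (fun i => g i ∩ A) hm hd) w
      have heq : ∀ n, (∑ k ∈ Finset.range n, N (g k ∩ A)) w = 0 := by
        intro n
        rw [ContinuousLinearMap.sum_apply]
        exact Finset.sum_eq_zero fun k _ => hg k
      rw [funext heq] at ht2
      exact tendsto_nhds_unique ht2 tendsto_const_nhds
  intro D hD hsub
  have := key hD
  rwa [Set.inter_eq_self_of_subset_left hsub] at this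

end BorelLocality
section Cutoff

variable {X : Type*} [TopologicalSpace X] {R : Subring (X →ᵇ ℝ)}

lemma exists_cutoff (hR : ApproximatesOpenSets R) {f : X →ᵇ ℝ} (hf : f ∈ R) {a b c d : ℝ}
    (hab : a < b) (hbc : b ≤ c) (hcd : c < d) :
    ∃ g : X →ᵇ ℝ, g ∈ R ∧ (∀ x, g x ∈ Set.Icc (0:ℝ) 1) ∧
      (∀ x, f x ∈ Set.Icc b c → g x = 1) ∧ (∀ x, f x ∉ Set.Ioo a d → g x = 0) := by
  have hba : (0:ℝ) < b - a := by linarith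
  have hdc : (0:ℝ) < d - c := by linarith
  -- p0 = (f - a)/(b - a)
  set p0 : X →ᵇ ℝ := const X (b - a)⁻¹ * (f - const X a) with hp0
  have hp0R : p0 ∈ R := hR.const_mul_mem _ _ (R.sub_mem hf (hR.const_mem a))
  have hp0x : ∀ x, p0 x = (f x - a) / (b - a) := by
    intro x
    simp [hp0, BoundedContinuousFunction.mul_apply, BoundedContinuousFunction.sub_apply,
      div_eq_inv_mul]
  obtain ⟨p1, hp1R, hp1x0⟩ := hR.sup_mem (const X 0) p0 (hR.const_mem 0) hp0R
  obtain ⟨p, hpR, hpx0⟩ := hR.inf_mem (const X 1) p1 (hR.const_mem 1) hp1R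
  have hp1x : ∀ x, p1 x = max 0 (p0 x) := fun x => by simpa using hp1x0 x
  have hpx : ∀ x, p x = min 1 (p1 x) := fun x => by simpa using hpx0 x
  set q0 : X →ᵇ ℝ := const X (d - c)⁻¹ * (const X d - f) with hq0
  have hq0R : q0 ∈ R := hR.const_mul_mem _ _ (R.sub_mem (hR.const_mem d) hf)
  have hq0x : ∀ x, q0 x = (d - f x) / (d - c) := by
    intro x
    simp [hq0, BoundedContinuousFunction.mul_apply, BoundedContinuousFunction.sub_apply,
      div_eq_inv_mul]
  obtain ⟨q1, hq1R, hq1x0⟩ := hR.sup_mem (const X 0) q0 (hR.const_mem 0) hq0R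
  obtain ⟨q, hqR, hqx0⟩ := hR.inf_mem (const X 1) q1 (hR.const_mem 1) hq1R
  have hq1x : ∀ x, q1 x = max 0 (q0 x) := fun x => by simpa using hq1x0 x
  have hqx : ∀ x, q x = min 1 (q1 x) := fun x => by simpa using hqx0 x
  have hp01 : ∀ x, p x ∈ Set.Icc (0:ℝ) 1 := by
    intro x
    rw [hpx x, hp1x x]
    constructor
    · simp [le_min_iff, le_max_iff]
    · simp [min_le_iff]
  have hq01 : ∀ x, q x ∈ Set.Icc (0:ℝ) 1 := by
    intro x
    rw [hqx x, hq1x x]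
    constructor
    · simp [le_min_iff, le_max_iff]
    · simp [min_le_iff]
  refine ⟨p * q, R.mul_mem hpR hqR, ?_, ?_, ?_⟩
  · intro x
    rw [BoundedContinuousFunction.mul_apply]
    exact ⟨mul_nonneg (hp01 x).1 (hq01 x).1,
      mul_le_one₀ (hp01 x).2 (hq01 x).1 (hq01 x).2⟩
  · intro x hx
    rw [BoundedContinuousFunction.mul_apply]
    have hp1 : p x = 1 := by
      rw [hpx x, hp1x x, hp0x x]
      have h1 : (1:ℝ) ≤ (f x - a) / (b - a) := by
        rw [le_div_iff₀ hba]
        have := hx.1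
        linarith
      rw [max_eq_right (by linarith), min_eq_left h1]
    have hq1 : q x = 1 := by
      rw [hqx x, hq1x x, hq0x x]
      have h1 : (1:ℝ) ≤ (d - f x) / (d - c) := by
        rw [le_div_iff₀ hdc]
        have := hx.2
        linarith
      rw [max_eq_right (by linarith), min_eq_left h1]
    rw [hp1, hq1, mul_one]
  · intro x hx
    rw [BoundedContinuousFunction.mul_apply]
    rw [Set.mem_Ioo, not_and_or, not_lt, not_lt] at hx
    rcases hx with hx | hx
    · have hp0' : p x = 0 := by
        rw [hpx x, hp1x x, hp0x x]
        have h1 : (f x - a) / (b - a) ≤ 0 :=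
          div_nonpos_of_nonpos_of_nonneg (by linarith) (by linarith)
        rw [max_eq_left h1, min_eq_right (by norm_num)]
      rw [hp0', zero_mul]
    · have hq0' : q x = 0 := by
        rw [hqx x, hq1x x, hq0x x]
        have h1 : (d - f x) / (d - c) ≤ 0 :=
          div_nonpos_of_nonpos_of_nonneg (by linarith) (by linarith)
        rw [max_eq_left h1, min_eq_right (by norm_num)]
      rw [hq0', mul_zero]

end Cutoff
section Main

variable {X : Type*} [MetricSpace X] [MeasurableSpace X] [BorelSpace X]
  {V : Type*} [NormedAddCommGroup V] [NormedSpace ℝ V]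

set_option maxHeartbeats 2000000 in
lemma main_nonneg (R : Subring (X →ᵇ ℝ)) [Module R V]
    (hR : ApproximatesOpenSets R) (hconst : ConstSMulCompat R V) (hnorm : NormSMulCompat R V)
    (N : Set X → V →L[ℝ] ℝ) (hN : IsLocalVectorMeasure R N)
    (f : ↥R) (hfpos : ∀ x, 0 ≤ (f : X →ᵇ ℝ) x) (v : V) (B : Set X) (hB : MeasurableSet B)
    (μ ν : Measure X) (hμ : IsFiniteMeasure μ) (hν : IsFiniteMeasure ν)
    (hdecomp : ∀ D : Set X, MeasurableSet D → N D v = (μ D).toReal - (ν D).toReal) :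
    N B (f • v) = (∫ x in B, (f : X →ᵇ ℝ) x ∂μ) - ∫ x in B, (f : X →ᵇ ℝ) x ∂ν := by
  haveI := hμ
  haveI := hν
  obtain ⟨M0, hM0pos, hM0⟩ := hN.sigma_additive.exists_bound
  set fb : X →ᵇ ℝ := (f : X →ᵇ ℝ) with hfb
  set C : ℝ := 4 * M0 * ‖v‖ + (μ Set.univ).toReal + (ν Set.univ).toReal + 1 with hC
  have hCpos : 0 < C := by positivity
  set Iμ : ℝ := ∫ x in B, fb x ∂μ with hIμ
  set Iν : ℝ := ∫ x in B, fb x ∂ν with hIν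
  have key : ∀ ε : ℝ, 0 < ε → |N B (f • v) - (Iμ - Iν)| ≤ ε * C := by
    intro ε hε
    -- the grid
    obtain ⟨m, hm⟩ : ∃ m : ℕ, ∀ x, fb x < (m : ℝ) * ε := by
      refine ⟨⌈(‖fb‖ + 1) / ε⌉₊, fun x => ?_⟩
      have h1 : fb x ≤ ‖fb‖ := (abs_le.mp (by simpa using fb.norm_coe_le_norm x)).2
      have h2 : (‖fb‖ + 1) / ε ≤ (⌈(‖fb‖ + 1) / ε⌉₊ : ℝ) := Nat.le_ceil _
      rw [div_le_iff₀ hε] at h2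
      linarith
    -- the slices
    set Bi : ℕ → Set X := fun i => B ∩ (⇑fb ⁻¹' (Set.Ico ((i : ℝ) * ε) (((i : ℝ) + 1) * ε)))
      with hBidef
    have hBim : ∀ i, MeasurableSet (Bi i) := fun i =>
      hB.inter (fb.continuous.measurable measurableSet_Ico)
    have hdisjIco : ∀ i j : ℕ, i ≠ j →
        Disjoint (Set.Ico ((i : ℝ) * ε) (((i : ℝ) + 1) * ε))
          (Set.Ico ((j : ℝ) * ε) (((j : ℝ) + 1) * ε)) := by
      have base : ∀ i j : ℕ, i < j →
          Disjoint (Set.Ico ((i : ℝ) * ε) (((i : ℝ) + 1) * ε))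
            (Set.Ico ((j : ℝ) * ε) (((j : ℝ) + 1) * ε)) := by
        intro i j h'
        rw [Set.Ico_disjoint_Ico]
        have h1 : ((i : ℝ) + 1) ≤ (j : ℝ) := by exact_mod_cast h'
        have h2 : ((i : ℝ) + 1) * ε ≤ (j : ℝ) * ε := by nlinarith
        exact le_trans (min_le_left _ _) (le_trans h2 (le_max_right _ _))
      intro i j hij
      rcases lt_or_gt_of_ne hij with h' | h'
      · exact base i j h'
      · exact (base j i h').symm
    have hBidisj : Pairwise (Function.onFun Disjoint Bi) := by
      intro i j hij
      exact ((hdisjIco i j hij).preimage ⇑fb).mono Set.inter_subset_right Set.inter_subset_right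
    have hcover : B = ⋃ i ∈ Finset.range m, Bi i := by
      ext x
      simp only [Set.mem_iUnion, Finset.mem_range, hBidef, Set.mem_inter_iff, Set.mem_preimage,
        Set.mem_Ico]
      constructor
      · intro hx
        have hfx0 : 0 ≤ fb x := hfpos x
        set i := ⌊fb x / ε⌋₊ with hi
        have h1 : (i : ℝ) * ε ≤ fb x := by
          rw [← le_div_iff₀ hε]
          exact Nat.floor_le (by positivity)
        have h2 : fb x < ((i : ℝ) + 1) * ε := by
          rw [← div_lt_iff₀ hε]
          exact Nat.lt_floor_add_one _
        refine ⟨i, ?_, hx, h1, h2⟩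
        by_contra hcon
        push_neg at hcon
        have h3 : (m : ℝ) ≤ (i : ℝ) := by exact_mod_cast hcon
        have h4 : (m : ℝ) * ε ≤ (i : ℝ) * ε := by nlinarith
        have h5 := hm x
        linarith
      · rintro ⟨i, _, hx, _⟩
        exact hx
    -- cutoffs
    have hcut : ∀ i : ℕ, ∃ g : X →ᵇ ℝ, g ∈ R ∧ (∀ x, g x ∈ Set.Icc (0:ℝ) 1) ∧
        (∀ x, fb x ∈ Set.Icc ((i : ℝ) * ε - ε/8) (((i : ℝ) + 1) * ε) → g x = 1) ∧
        (∀ x, fb x ∉ Set.Ioo ((i : ℝ) * ε - ε/4) (((i : ℝ) + 1) * ε + ε/8) → g x = 0) :=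
      fun i => exists_cutoff hR f.2 (by linarith) (by linarith) (by linarith)
    choose g hgR hg01 hg1 hg0 using hcut
    set h : ℕ → X →ᵇ ℝ := fun i => g i * (fb - const X ((i : ℝ) * ε)) with hhdef
    have hhR : ∀ i, h i ∈ R := fun i =>
      R.mul_mem (hgR i) (R.sub_mem f.2 (hR.const_mem _))
    have hhx : ∀ i x, h i x = g i x * (fb x - (i : ℝ) * ε) := by
      intro i x
      simp [hhdef, BoundedContinuousFunction.mul_apply, BoundedContinuousFunction.sub_apply]
    have hh0 : ∀ (i : ℕ) (x : X), fb x ∉ Set.Ioo ((i : ℝ) * ε - ε/4) (((i : ℝ) + 1) * ε + ε/8) →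
        h i x = 0 := by
      intro i x hx
      rw [hhx i x, hg0 i x hx, zero_mul]
    have hsupph : ∀ i, tsupport ⇑(h i) ⊆
        ⇑fb ⁻¹' (Set.Icc ((i : ℝ) * ε - ε/4) (((i : ℝ) + 1) * ε + ε/8)) := by
      intro i
      apply closure_minimal
      · intro x hx
        rw [Function.mem_support] at hx
        by_contra hcon
        refine hx (hh0 i x ?_)
        intro hmem
        exact hcon ⟨le_of_lt hmem.1, le_of_lt hmem.2⟩
      · exact isClosed_Icc.preimage fb.continuous
    have hnormh : ∀ i, ‖h i‖ ≤ 2 * ε := by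
      intro i
      rw [BoundedContinuousFunction.norm_le (by positivity)]
      intro x
      by_cases hx : fb x ∈ Set.Ioo ((i : ℝ) * ε - ε/4) (((i : ℝ) + 1) * ε + ε/8)
      · have h1 : |g i x| ≤ 1 := abs_le.mpr ⟨by linarith [(hg01 i x).1], (hg01 i x).2⟩
        have h2 : |fb x - (i : ℝ) * ε| ≤ 2 * ε :=
          abs_le.mpr ⟨by linarith [hx.1], by linarith [hx.2]⟩
        calc ‖h i x‖ = |g i x| * |fb x - (i : ℝ) * ε| := by
              rw [hhx i x, Real.norm_eq_abs, abs_mul]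
          _ ≤ 1 * (2 * ε) := mul_le_mul h1 h2 (abs_nonneg _) (by norm_num)
          _ = 2 * ε := one_mul _
      · rw [hh0 i x hx]
        simp
        positivity
    -- bundled elements of R
    set Hi : ℕ → ↥R := fun i => ⟨h i, hhR i⟩ with hHidef
    set Gi : ℕ → ↥R := fun i => ⟨g i, hgR i⟩ with hGidef
    set Fci : ℕ → ↥R := fun i => ⟨const X ((i : ℝ) * ε), hR.const_mem ((i : ℝ) * ε)⟩ with hFcidef
    -- Claim A
    have claimA : ∀ i : ℕ, N (Bi i) (f • v) =
        N (Bi i) (Hi i • v) + ((i : ℝ) * ε) * (N (Bi i) v) := by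
      intro i
      have hfsplit : f = Hi i + (1 - Gi i) * (f - Fci i) + Fci i := by
        have hh : Hi i = Gi i * (f - Fci i) := by
          apply Subtype.ext
          show h i = g i * (fb - const X ((i : ℝ) * ε))
          rfl
        rw [hh]
        ring
      have hmid : N (Bi i) (((1 - Gi i) * (f - Fci i)) • v) = 0 := by
        refine N_zero_of_locNorm_zero R hnorm N hN
          (A := ⇑fb ⁻¹' (Set.Ioo ((i : ℝ) * ε - ε/16) (((i : ℝ) + 1) * ε)))
          (isOpen_Ioo.preimage fb.continuous) _ ?_ (Bi i) (hBim i) ?_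
        · rw [locNorm_eq_zero_iff R hnorm]
          intro t hts htn
          rw [← mul_smul]
          have hzt : t * ((1 - Gi i) * (f - Fci i)) = 0 := by
            apply Subtype.ext
            ext x
            show (t : X →ᵇ ℝ) x * (((1 - Gi i) * (f - Fci i) : ↥R) : X →ᵇ ℝ) x = 0
            by_cases hx : (t : X →ᵇ ℝ) x = 0
            · rw [hx, zero_mul]
            · have hxU : x ∈ ⇑fb ⁻¹' (Set.Ioo ((i : ℝ) * ε - ε/16) (((i : ℝ) + 1) * ε)) :=
                hts (subset_closure (Function.mem_support.mpr hx))
              have hg1x : g i x = 1 := hg1 i x ⟨by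
                  have := hxU.1; simp only [Set.mem_preimage, Set.mem_Ioo] at hxU; linarith [hxU.1],
                by simp only [Set.mem_preimage, Set.mem_Ioo] at hxU; linarith [hxU.2]⟩
              have hcoe : (((1 - Gi i) * (f - Fci i) : ↥R) : X →ᵇ ℝ) x
                  = (1 - g i x) * (fb x - (i : ℝ) * ε) := by
                simp [hGidef, hFcidef, BoundedContinuousFunction.mul_apply,
                  BoundedContinuousFunction.sub_apply, hfb]
              rw [hcoe, hg1x]
              ring
          rw [hzt, zero_smul]
        · intro x hx
          have hx2 := hx.2
          simp only [Set.mem_preimage, Set.mem_Ico] at hx2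
          simp only [Set.mem_preimage, Set.mem_Ioo]
          exact ⟨by linarith [hx2.1], hx2.2⟩
      calc N (Bi i) (f • v)
          = N (Bi i) ((Hi i + (1 - Gi i) * (f - Fci i) + Fci i) • v) := by rw [← hfsplit]
        _ = N (Bi i) (Hi i • v) + N (Bi i) (((1 - Gi i) * (f - Fci i)) • v)
            + N (Bi i) ((Fci i) • v) := by
            rw [add_smul, add_smul, map_add, map_add]
        _ = N (Bi i) (Hi i • v) + ((i : ℝ) * ε) * (N (Bi i) v) := by
            rw [hmid, add_zero]
            congr 1
            have : (Fci i) • v = ((i : ℝ) * ε) • v := hconst ((i : ℝ) * ε) (hR.const_mem _) v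
            rw [this, (N (Bi i)).map_smul, smul_eq_mul]
    -- parity estimate
    have parity_est : ∀ s : Finset ℕ,
        (∀ i ∈ s, ∀ j ∈ s, i ≠ j → (i + 2 ≤ j ∨ j + 2 ≤ i)) →
        |∑ i ∈ s, N (Bi i) (Hi i • v)| ≤ M0 * (2 * ε * ‖v‖) := by
      intro s hgap
      set u : V := ∑ i ∈ s, (Hi i) • v with hudef
      have hIccdisj : ∀ i j : ℕ, i + 2 ≤ j →
          Disjoint (Set.Icc ((i : ℝ) * ε - ε/4) (((i : ℝ) + 1) * ε + ε/8))
            (Set.Icc ((j : ℝ) * ε - ε/4) (((j : ℝ) + 1) * ε + ε/8)) := by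
        intro i j hij
        have h1 : (i : ℝ) + 2 ≤ (j : ℝ) := by exact_mod_cast hij
        refine Set.disjoint_left.mpr fun y hy1 hy2 => ?_
        have := hy1.2
        have := hy2.1
        nlinarith
      have hsuppdisj : ∀ i j : ℕ, (i + 2 ≤ j ∨ j + 2 ≤ i) →
          Disjoint (tsupport ⇑((Hi i : X →ᵇ ℝ))) (tsupport ⇑((Hi j : X →ᵇ ℝ))) := by
        intro i j hij
        have hco : ∀ k, ⇑((Hi k : X →ᵇ ℝ)) = ⇑(h k) := fun k => rfl
        rw [hco i, hco j]
        rcases hij with hij | hij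
        · exact ((hIccdisj i j hij).preimage ⇑fb).mono (hsupph i) (hsupph j)
        · exact (((hIccdisj j i hij).preimage ⇑fb).symm).mono (hsupph i) (hsupph j)
      have hu : ‖u‖ ≤ (2 * ε) * ‖v‖ := by
        refine hnorm s Hi (fun _ => v) (2 * ε) ‖v‖ (by positivity) (norm_nonneg _)
          (fun i hi j hj hij => hsuppdisj i j (hgap i ?_ j ?_ hij)) (fun i _ => hnormh i)
          (fun i _ => le_refl _)
        · exact hi
        · exact hj
      have step1 : ∀ i ∈ s, N (Bi i) u = N (Bi i) (Hi i • v) := by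
        intro i hi
        rw [hudef, map_sum]
        refine Finset.sum_eq_single_of_mem i hi fun j hj hji => ?_
        -- N (Bi i) (Hi j • v) = 0 for j ≠ i in s
        refine N_zero_of_locNorm_zero R hnorm N hN
          (A := ⇑fb ⁻¹' (Set.Ioo ((i : ℝ) * ε - ε/4) (((i : ℝ) + 1) * ε + ε/8)))
          (isOpen_Ioo.preimage fb.continuous) _ ?_ (Bi i) (hBim i) ?_
        · rw [locNorm_eq_zero_iff R hnorm]
          intro t hts htn
          rw [← mul_smul]
          have hzt : t * Hi j = 0 := by
            apply Subtype.ext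
            ext x
            show (t : X →ᵇ ℝ) x * h j x = 0
            by_cases hx : (t : X →ᵇ ℝ) x = 0
            · rw [hx, zero_mul]
            · have hxU := hts (subset_closure (Function.mem_support.mpr hx))
              simp only [Set.mem_preimage, Set.mem_Ioo] at hxU
              have hhj : h j x = 0 := by
                apply hh0
                simp only [Set.mem_Ioo, not_and_or, not_lt]
                rcases hgap i hi j hj (Ne.symm hji) with hij | hij
                · left
                  have h1 : (i : ℝ) + 2 ≤ (j : ℝ) := by exact_mod_cast hij
                  nlinarith [hxU.2]
                · right
                  have h1 : (j : ℝ) + 2 ≤ (i : ℝ) := by exact_mod_cast hij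
                  nlinarith [hxU.1]
              rw [hhj, mul_zero]
          rw [hzt, zero_smul]
        · intro x hx
          have hx2 := hx.2
          simp only [Set.mem_preimage, Set.mem_Ico] at hx2
          simp only [Set.mem_preimage, Set.mem_Ioo]
          exact ⟨by linarith [hx2.1], by linarith [hx2.2]⟩
      have step2 : ∑ i ∈ s, N (Bi i) (Hi i • v) = N (⋃ i ∈ s, Bi i) u := by
        rw [← Finset.sum_congr rfl step1]
        have := hN.sigma_additive.finsetAdd Bi hBim hBidisj s
        rw [this, ContinuousLinearMap.sum_apply]
      rw [step2]
      have hDm : MeasurableSet (⋃ i ∈ s, Bi i) :=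
        Finset.measurableSet_biUnion s (fun i _ => hBim i)
      calc |N (⋃ i ∈ s, Bi i) u| = ‖N (⋃ i ∈ s, Bi i) u‖ := (Real.norm_eq_abs _).symm
        _ ≤ ‖N (⋃ i ∈ s, Bi i)‖ * ‖u‖ := (N _).le_opNorm u
        _ ≤ M0 * (2 * ε * ‖v‖) := by
            refine mul_le_mul (hM0 _ hDm) ?_ (norm_nonneg _) hM0pos
            calc ‖u‖ ≤ (2 * ε) * ‖v‖ := hu
              _ = 2 * ε * ‖v‖ := by ring
    -- split into parities
    classical
    set s0 : Finset ℕ := (Finset.range m).filter (fun i => i % 2 = 0) with hs0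
    set s1 : Finset ℕ := (Finset.range m).filter (fun i => ¬(i % 2 = 0)) with hs1
    have hTsum : N B (f • v) = (∑ i ∈ s0, N (Bi i) (Hi i • v))
        + (∑ i ∈ s1, N (Bi i) (Hi i • v))
        + ∑ i ∈ Finset.range m, ((i : ℝ) * ε) * (N (Bi i) v) := by
      have h1 : N B (f • v) = ∑ i ∈ Finset.range m, N (Bi i) (f • v) := by
        conv_lhs => rw [hcover]
        rw [hN.sigma_additive.finsetAdd Bi hBim hBidisj (Finset.range m),
          ContinuousLinearMap.sum_apply]
      rw [h1, Finset.sum_congr rfl (fun i _ => claimA i), Finset.sum_add_distrib]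
      congr 1
      exact (Finset.sum_filter_add_sum_filter_not (Finset.range m) (fun i => i % 2 = 0) _).symm
    have hgap0 : ∀ i ∈ s0, ∀ j ∈ s0, i ≠ j → (i + 2 ≤ j ∨ j + 2 ≤ i) := by
      intro i hi j hj hij
      simp only [hs0, Finset.mem_filter] at hi hj
      omega
    have hgap1 : ∀ i ∈ s1, ∀ j ∈ s1, i ≠ j → (i + 2 ≤ j ∨ j + 2 ≤ i) := by
      intro i hi j hj hij
      simp only [hs1, Finset.mem_filter] at hi hj
      omega
    have hpar0 := parity_est s0 hgap0
    have hpar1 := parity_est s1 hgap1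
    -- integral side
    have intSide : ∀ κ : Measure X, IsFiniteMeasure κ →
        |(∫ x in B, fb x ∂κ) - ∑ i ∈ Finset.range m, ((i : ℝ) * ε) * (κ (Bi i)).toReal|
          ≤ ε * (κ Set.univ).toReal := by
      intro κ hκ
      haveI := hκ
      have hint : ∀ s : Set X, IntegrableOn (fun x => fb x) s κ :=
        fun s => (fb.integrable κ).integrableOn
      have hsplit : (∫ x in B, fb x ∂κ) = ∑ i ∈ Finset.range m, ∫ x in Bi i, fb x ∂κ := by
        conv_lhs => rw [hcover]
        exact integral_biUnion_finset (Finset.range m) (fun i _ => hBim i)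
          (hBidisj.set_pairwise _) (fun i _ => hint _)
      have hterm : ∀ i ∈ Finset.range m,
          |(∫ x in Bi i, fb x ∂κ) - ((i : ℝ) * ε) * (κ (Bi i)).toReal|
            ≤ ε * (κ (Bi i)).toReal := by
        intro i _
        have heq : (∫ x in Bi i, fb x ∂κ) - ((i : ℝ) * ε) * (κ (Bi i)).toReal
            = ∫ x in Bi i, (fb x - (i : ℝ) * ε) ∂κ := by
          rw [integral_sub (hint _) (integrableOn_const (measure_lt_top κ _).ne)]
          rw [setIntegral_const, smul_eq_mul, measureReal_def]
          ring
        rw [heq, ← Real.norm_eq_abs]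
        refine norm_setIntegral_le_of_norm_le_const (measure_lt_top κ _) ?_
        intro x hx
        have hx2 := hx.2
        simp only [Set.mem_preimage, Set.mem_Ico] at hx2
        rw [Real.norm_eq_abs, abs_le]
        constructor
        · linarith [hx2.1]
        · linarith [hx2.2]
      have hmeassum : ∑ i ∈ Finset.range m, (κ (Bi i)).toReal = (κ B).toReal := by
        conv_rhs => rw [hcover]
        rw [measure_biUnion_finset (hBidisj.set_pairwise _) (fun i _ => hBim i),
          ENNReal.toReal_sum (fun i _ => measure_ne_top κ _)]
      calc |(∫ x in B, fb x ∂κ) - ∑ i ∈ Finset.range m, ((i : ℝ) * ε) * (κ (Bi i)).toReal|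
          = |∑ i ∈ Finset.range m,
              ((∫ x in Bi i, fb x ∂κ) - ((i : ℝ) * ε) * (κ (Bi i)).toReal)| := by
            rw [Finset.sum_sub_distrib, ← hsplit]
        _ ≤ ∑ i ∈ Finset.range m,
              |(∫ x in Bi i, fb x ∂κ) - ((i : ℝ) * ε) * (κ (Bi i)).toReal| :=
            Finset.abs_sum_le_sum_abs _ _
        _ ≤ ∑ i ∈ Finset.range m, ε * (κ (Bi i)).toReal := Finset.sum_le_sum hterm
        _ = ε * (κ B).toReal := by rw [← Finset.mul_sum, hmeassum]
        _ ≤ ε * (κ Set.univ).toReal := by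
            have h2 : (κ B).toReal ≤ (κ Set.univ).toReal :=
              ENNReal.toReal_mono (measure_ne_top κ _) (measure_mono (Set.subset_univ B))
            nlinarith
    have hμint := intSide μ hμ
    have hνint := intSide ν hν
    have hdecompsum : ∑ i ∈ Finset.range m, ((i : ℝ) * ε) * (N (Bi i) v)
        = (∑ i ∈ Finset.range m, ((i : ℝ) * ε) * (μ (Bi i)).toReal)
          - ∑ i ∈ Finset.range m, ((i : ℝ) * ε) * (ν (Bi i)).toReal := by
      rw [← Finset.sum_sub_distrib]
      exact Finset.sum_congr rfl fun i _ => by rw [hdecomp (Bi i) (hBim i)]; ring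
    rw [hTsum, hdecompsum]
    set a0 := ∑ i ∈ s0, N (Bi i) (Hi i • v) with ha0
    set a1 := ∑ i ∈ s1, N (Bi i) (Hi i • v) with ha1
    set sμ := ∑ i ∈ Finset.range m, ((i : ℝ) * ε) * (μ (Bi i)).toReal with hsμ
    set sν := ∑ i ∈ Finset.range m, ((i : ℝ) * ε) * (ν (Bi i)).toReal with hsν
    have trig : a0 + a1 + (sμ - sν) - (Iμ - Iν) = a0 + a1 + (sμ - Iμ) + (Iν - sν) := by ring
    calc |a0 + a1 + (sμ - sν) - (Iμ - Iν)| = |a0 + a1 + (sμ - Iμ) + (Iν - sν)| := by rw [trig]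
      _ ≤ |a0 + a1 + (sμ - Iμ)| + |Iν - sν| := abs_add_le _ _
      _ ≤ |a0 + a1| + |sμ - Iμ| + |Iν - sν| := by
          have := abs_add_le (a0 + a1) (sμ - Iμ)
          linarith
      _ ≤ |a0| + |a1| + |sμ - Iμ| + |Iν - sν| := by
          have := abs_add_le a0 a1
          linarith
      _ ≤ M0 * (2 * ε * ‖v‖) + M0 * (2 * ε * ‖v‖) + ε * (μ Set.univ).toReal
            + ε * (ν Set.univ).toReal := by
          have h1 : |sμ - Iμ| ≤ ε * (μ Set.univ).toReal := by
            rw [abs_sub_comm]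
            exact hμint
          have h2 : |Iν - sν| ≤ ε * (ν Set.univ).toReal := hνint
          linarith [hpar0, hpar1]
      _ ≤ ε * C := by
          rw [hC]
          nlinarith [hε, norm_nonneg v, hM0pos]
  by_contra hne
  have hpos : 0 < |N B (f • v) - (Iμ - Iν)| := abs_pos.mpr (sub_ne_zero.mpr hne)
  have hkey := key (|N B (f • v) - (Iμ - Iν)| / (2 * C)) (by positivity)
  have heq2 : |N B (f • v) - (Iμ - Iν)| / (2 * C) * C = |N B (f • v) - (Iμ - Iν)| / 2 := by
    field_simp
  rw [heq2] at hkey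
  linarith

end Main

/-- for a local vector measure `N` on `V`, `f ∈ R`, `v ∈ V` and `B` Borel,
`N(B)(f v) = ∫_B f d(v·N)`, where the integral against the finite signed measure
`v·N : B ↦ N(B)(v)` is expressed through any Jordan-type decomposition `v·N = μ - ν`
into finite (positive) measures. -/
theorem statement7 {X : Type*} [MetricSpace X] [CompleteSpace X]
    [TopologicalSpace.SeparableSpace X] [MeasurableSpace X] [BorelSpace X]
    {V : Type*} [NormedAddCommGroup V] [NormedSpace ℝ V]
    (R : Subring (X →ᵇ ℝ)) [Module R V]
    (hR : ApproximatesOpenSets R) (hconst : ConstSMulCompat R V) (hnorm : NormSMulCompat R V)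
    (N : Set X → V →L[ℝ] ℝ) (hN : IsLocalVectorMeasure R N)
    (f : ↥R) (v : V) (B : Set X) (hB : MeasurableSet B)
    (μ ν : Measure X) (hμ : IsFiniteMeasure μ) (hν : IsFiniteMeasure ν)
    (hdecomp : ∀ D : Set X, MeasurableSet D → N D v = (μ D).toReal - (ν D).toReal) :
    N B (f • v) = (∫ x in B, (f : X →ᵇ ℝ) x ∂μ) - ∫ x in B, (f : X →ᵇ ℝ) x ∂ν := by
  haveI := hμ
  haveI := hν
  set c : ℝ := ‖(f : X →ᵇ ℝ)‖ with hc
  set Fc : ↥R := ⟨const X c, hR.const_mem c⟩ with hFc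
  have hcoe : ∀ x, ((f + Fc : ↥R) : X →ᵇ ℝ) x = (f : X →ᵇ ℝ) x + c := fun x => rfl
  have hf' : ∀ x, 0 ≤ ((f + Fc : ↥R) : X →ᵇ ℝ) x := by
    intro x
    rw [hcoe x]
    have h1 : |(f : X →ᵇ ℝ) x| ≤ c := by
      rw [hc]
      simpa using (f : X →ᵇ ℝ).norm_coe_le_norm x
    have := (abs_le.mp h1).1
    linarith
  have hmain := main_nonneg R hR hconst hnorm N hN (f + Fc) hf' v B hB μ ν hμ hν hdecomp
  have hL : N B ((f + Fc) • v) = N B (f • v) + c * ((μ B).toReal - (ν B).toReal) := by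
    rw [add_smul, map_add]
    congr 1
    have h2 : Fc • v = c • v := hconst c (hR.const_mem c) v
    rw [h2, (N B).map_smul, smul_eq_mul, hdecomp B hB]
  have hint : ∀ κ : Measure X, IsFiniteMeasure κ →
      (∫ x in B, ((f + Fc : ↥R) : X →ᵇ ℝ) x ∂κ)
        = (∫ x in B, (f : X →ᵇ ℝ) x ∂κ) + c * (κ B).toReal := by
    intro κ hκ
    haveI := hκ
    have h1 : (∫ x in B, ((f + Fc : ↥R) : X →ᵇ ℝ) x ∂κ)
        = ∫ x in B, ((f : X →ᵇ ℝ) x + c) ∂κ := by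
      exact setIntegral_congr_fun hB (fun x _ => hcoe x)
    rw [h1, integral_add (((f : X →ᵇ ℝ)).integrable κ).integrableOn
      (integrableOn_const (measure_lt_top κ _).ne)]
    rw [setIntegral_const, smul_eq_mul, mul_comm, measureReal_def]
  rw [hL, hint μ hμ, hint ν hν] at hmain
  linarith
end
end

section
/- Let X be a Polish space and let R ⊆ R' ⊆ C_b(X) be two subrings that approximate open sets. Let V be a normed R'-module (hence, by restriction of the action, also a normed R-module) and let N be a σ-additive map from the Borel σ-algebra of X to the continuous dual V'. Then N is weakly local with respect to R (i.e. N(A)(v) = 0 for every open A and v with ‖v‖_{|A,R} = 0) if and only if N is weakly local with respect to R' (i.e. N(A)(v) = 0 for every open A and v with ‖v‖_{|A,R'} = 0), where ‖v‖_{|A,S} := sup{‖f v‖ : f ∈ S, supp f ⊆ A, ‖f‖_∞ ≤ 1} for a subring S. -/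
open BoundedContinuousFunction Filter Topology Set MeasureTheory ENNReal

noncomputable section

section Helpers

variable {X : Type*} [MeasurableSpace X] {E : Type*} [NormedAddCommGroup E] {N : Set X → E}

lemma sigmaAdditive_empty (h : SigmaAdditive N) : N ∅ = 0 := by
  have h0 := h (fun _ => ∅) (fun _ => MeasurableSet.empty)
    (fun i j _ => by simp [Function.onFun])
  simp only [Set.iUnion_empty] at h0
  have h1 : Tendsto (fun n : ℕ => ∑ _k ∈ Finset.range (n + 1), N ∅) atTop (𝓝 (N ∅)) :=
    h0.comp (tendsto_add_atTop_nat 1)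
  have h2 := h1.sub h0
  simp only [Finset.sum_range_succ, add_sub_cancel_left, sub_self] at h2
  exact tendsto_nhds_unique tendsto_const_nhds h2

lemma sigmaAdditive_union (h : SigmaAdditive N) {A B : Set X} (hA : MeasurableSet A)
    (hB : MeasurableSet B) (hAB : Disjoint A B) : N (A ∪ B) = N A + N B := by
  set C : ℕ → Set X := fun n => if n = 0 then A else if n = 1 then B else ∅ with hC
  have hmeas : ∀ n, MeasurableSet (C n) := by
    intro n; rcases n with _ | _ | n <;> simp [C, hA, hB]
  have hdisj : Pairwise (Function.onFun Disjoint C) := by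
    intro i j hij
    rcases i with _ | _ | i <;> rcases j with _ | _ | j <;>
      simp_all [C, Function.onFun, hAB, hAB.symm]
  have hunion : (⋃ n, C n) = A ∪ B := by
    apply Set.Subset.antisymm
    · exact Set.iUnion_subset fun n => by
        rcases n with _ | _ | n <;> simp [C]
    · rintro x (hx | hx)
      · exact Set.mem_iUnion.2 ⟨0, by simp [C, hx]⟩
      · exact Set.mem_iUnion.2 ⟨1, by simp [C, hx]⟩
  have htend := h C hmeas hdisj
  rw [hunion] at htend
  have heq : ∀ n, ∑ k ∈ Finset.range (n + 2), N (C k) = N A + N B := by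
    intro n
    induction n with
    | zero => simp [Finset.sum_range_succ, C]
    | succ m ih =>
      rw [show m + 1 + 2 = (m + 2) + 1 from rfl, Finset.sum_range_succ, ih]
      simp [C, sigmaAdditive_empty h]
  have h2 : Tendsto (fun n : ℕ => ∑ k ∈ Finset.range (n + 2), N (C k)) atTop
      (𝓝 (N (A ∪ B))) := htend.comp (tendsto_add_atTop_nat 2)
  rw [show (fun n : ℕ => ∑ k ∈ Finset.range (n + 2), N (C k)) = fun _ => N A + N B from
    funext heq] at h2
  exact tendsto_nhds_unique h2 tendsto_const_nhds

lemma sigmaAdditive_mono (h : SigmaAdditive N) (B : ℕ → Set X)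
    (hmeas : ∀ n, MeasurableSet (B n)) (hmono : Monotone B) :
    Tendsto (fun n => N (B n)) atTop (𝓝 (N (⋃ n, B n))) := by
  have hdmeas : ∀ n, MeasurableSet (disjointed B n) := MeasurableSet.disjointed hmeas
  have htend := h (disjointed B) hdmeas (disjoint_disjointed B)
  rw [iUnion_disjointed] at htend
  have heq : ∀ n, ∑ k ∈ Finset.range (n + 1), N (disjointed B k) = N (B n) := by
    intro n
    induction n with
    | zero => simp [disjointed_zero]
    | succ m ih =>
      rw [Finset.sum_range_succ, ih, hmono.disjointed_add_one,
        ← sigmaAdditive_union h (hmeas m) ((hmeas (m + 1)).diff (hmeas m))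
          Set.disjoint_sdiff_right,
        Set.union_diff_cancel (hmono (Nat.le_succ m))]
  have h2 : Tendsto (fun n : ℕ => ∑ k ∈ Finset.range (n + 1), N (disjointed B k)) atTop
      (𝓝 (N (⋃ n, B n))) := htend.comp (tendsto_add_atTop_nat 1)
  rwa [funext heq] at h2

end Helpers

lemma normSMul_le_norm {X : Type*} [TopologicalSpace X] {R' : Subring (X →ᵇ ℝ)} {V : Type*}
    [NormedAddCommGroup V] [Module R' V] (hnorm' : NormSMulCompat R' V)
    (g : ↥R') (v : V) (hg : ‖(g : X →ᵇ ℝ)‖ ≤ 1) : ‖g • v‖ ≤ ‖v‖ := by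
  have := hnorm' {0} (fun _ => g) (fun _ => v) 1 ‖v‖ zero_le_one (norm_nonneg v)
    (by simp) (by simpa using hg) (by simp)
  simpa using this

set_option maxHeartbeats 1000000 in
/-- for subrings `R ⊆ R'` both approximating open sets and `V` a normed
`R'`-module (hence a normed `R`-module by restricting the action), a σ-additive
`N : Borel → V'` is weakly local w.r.t. `R` iff it is weakly local w.r.t. `R'`. -/
theorem statement10 {X : Type*} [MetricSpace X] [CompleteSpace X]
    [TopologicalSpace.SeparableSpace X] [MeasurableSpace X] [BorelSpace X]
    {V : Type*} [NormedAddCommGroup V] [NormedSpace ℝ V]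
    (R R' : Subring (X →ᵇ ℝ)) (hRR' : R ≤ R')
    [Module R V] [Module R' V]
    (hrestrict : ∀ (f : X →ᵇ ℝ) (hf : f ∈ R) (hf' : f ∈ R') (v : V),
      (⟨f, hf⟩ : ↥R) • v = (⟨f, hf'⟩ : ↥R') • v)
    (hR : ApproximatesOpenSets R) (hR' : ApproximatesOpenSets R')
    (hconst' : ConstSMulCompat R' V) (hnorm' : NormSMulCompat R' V)
    (N : Set X → V →L[ℝ] ℝ) (hadd : SigmaAdditive N) :
    (∀ A : Set X, IsOpen A → ∀ v : V, locNorm R A v = 0 → N A v = 0) ↔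
      (∀ A : Set X, IsOpen A → ∀ v : V, locNorm R' A v = 0 → N A v = 0) := by
  -- bounds and zero membership for the defining sets of `locNorm`
  have hbdd' : ∀ (A : Set X) (v : V), BddAbove
      {r : ℝ | ∃ f : ↥R', tsupport ⇑((f : X →ᵇ ℝ)) ⊆ A ∧ ‖(f : X →ᵇ ℝ)‖ ≤ 1 ∧
        r = ‖f • v‖} := by
    rintro A v
    refine ⟨‖v‖, ?_⟩
    rintro r ⟨f, -, hf1, rfl⟩
    exact normSMul_le_norm hnorm' f v hf1
  have hbddR : ∀ (A : Set X) (v : V), BddAbove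
      {r : ℝ | ∃ f : ↥R, tsupport ⇑((f : X →ᵇ ℝ)) ⊆ A ∧ ‖(f : X →ᵇ ℝ)‖ ≤ 1 ∧
        r = ‖f • v‖} := by
    rintro A v
    refine ⟨‖v‖, ?_⟩
    rintro r ⟨f, -, hf1, rfl⟩
    rw [show (f : ↥R) • v = (⟨(f : X →ᵇ ℝ), hRR' f.2⟩ : ↥R') • v from by
      rw [← hrestrict (f : X →ᵇ ℝ) f.2 (hRR' f.2) v]]
    exact normSMul_le_norm hnorm' _ v hf1
  have hzero' : ∀ (A : Set X) (v : V), (0 : ℝ) ∈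
      {r : ℝ | ∃ f : ↥R', tsupport ⇑((f : X →ᵇ ℝ)) ⊆ A ∧ ‖(f : X →ᵇ ℝ)‖ ≤ 1 ∧
        r = ‖f • v‖} := by
    intro A v
    refine ⟨0, ?_, ?_, ?_⟩
    · simp [tsupport]
    · simp
    · simp
  have hzeroR : ∀ (A : Set X) (v : V), (0 : ℝ) ∈
      {r : ℝ | ∃ f : ↥R, tsupport ⇑((f : X →ᵇ ℝ)) ⊆ A ∧ ‖(f : X →ᵇ ℝ)‖ ≤ 1 ∧
        r = ‖f • v‖} := by
    intro A v
    refine ⟨0, ?_, ?_, ?_⟩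
    · simp [tsupport]
    · simp
    · simp
  constructor
  · -- easy direction: `R`-weak locality implies `R'`-weak locality
    intro hloc A hA v hv'
    apply hloc A hA v
    -- `locNorm R A v = 0`
    unfold locNorm
    apply le_antisymm
    · apply Real.sSup_le _ le_rfl
      rintro r ⟨f, hsupp, hf1, rfl⟩
      have key : (f : ↥R) • v = (⟨(f : X →ᵇ ℝ), hRR' f.2⟩ : ↥R') • v := by
        rw [← hrestrict (f : X →ᵇ ℝ) f.2 (hRR' f.2) v]
      have hmem : ‖(⟨(f : X →ᵇ ℝ), hRR' f.2⟩ : ↥R') • v‖ ∈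
          {r : ℝ | ∃ g : ↥R', tsupport ⇑((g : X →ᵇ ℝ)) ⊆ A ∧ ‖(g : X →ᵇ ℝ)‖ ≤ 1 ∧
            r = ‖g • v‖} := ⟨⟨(f : X →ᵇ ℝ), hRR' f.2⟩, hsupp, hf1, rfl⟩
      have := le_csSup (hbdd' A v) hmem
      rw [key]
      calc ‖(⟨(f : X →ᵇ ℝ), hRR' f.2⟩ : ↥R') • v‖ ≤ locNorm R' A v := this
        _ = 0 := hv'
    · exact le_csSup (hbddR A v) (hzeroR A v)
  · -- hard direction: `R'`-weak locality implies `R`-weak locality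
    intro hloc' A hA v hv
    obtain ⟨g, hgR, hgmono, hglim⟩ := hR.approx A hA
    have hgle : ∀ k x, g k x ≤ A.indicator (fun _ => (1 : ℝ)) x := fun k x =>
      (hgmono x).ge_of_tendsto (hglim x) k
    set B : ℕ → Set X := fun k => {x | 3/4 < g k x} with hBdef
    have hBopen : ∀ k, IsOpen (B k) :=
      fun k => isOpen_lt continuous_const (g k).continuous
    have hBmono : Monotone B := fun k l hkl x hx => lt_of_lt_of_le hx (hgmono x hkl)
    have hBunion : (⋃ k, B k) = A := by
      ext x
      simp only [Set.mem_iUnion, hBdef, Set.mem_setOf_eq]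
      constructor
      · rintro ⟨k, hk⟩
        by_contra hxA
        have h1 := hgle k x
        rw [Set.indicator_of_notMem hxA] at h1
        linarith
      · intro hx
        have h1 := hglim x
        rw [Set.indicator_of_mem hx] at h1
        exact (h1.eventually (eventually_gt_nhds (by norm_num : (3:ℝ)/4 < 1))).exists
    -- show `N (B k) v = 0` for every `k`
    have hNB : ∀ k, N (B k) v = 0 := by
      intro k
      apply hloc' (B k) (hBopen k) v
      -- construct a cutoff `h ∈ R` equal to `1` on `B k` with `tsupport h ⊆ A`
      have hpR : BoundedContinuousFunction.const X 4 * g k + BoundedContinuousFunction.const X (-2) ∈ R :=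
        R.add_mem (hR.const_mul_mem 4 (g k) (hgR k)) (hR.const_mem (-2))
      obtain ⟨q, hqR, hq⟩ := hR.sup_mem _ (BoundedContinuousFunction.const X 0) hpR
        (hR.const_mem 0)
      obtain ⟨h, hhR, hh⟩ := hR.inf_mem q (BoundedContinuousFunction.const X 1) hqR
        (hR.const_mem 1)
      have hhval : ∀ x, h x = min (max (4 * g k x - 2) 0) 1 := by
        intro x
        rw [hh x, hq x]
        simp [sub_eq_add_neg]
      have hh01 : ∀ x, 0 ≤ h x ∧ h x ≤ 1 := by
        intro x
        rw [hhval x]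
        exact ⟨le_min (le_max_right _ _) zero_le_one, min_le_right _ _⟩
      have hnorm_h : ‖h‖ ≤ 1 := by
        rw [BoundedContinuousFunction.norm_le zero_le_one]
        intro x
        rw [Real.norm_eq_abs, abs_le]
        exact ⟨by linarith [(hh01 x).1], (hh01 x).2⟩
      have hsupp_h : tsupport ⇑h ⊆ A := by
        have hsub : Function.support ⇑h ⊆ {x | 1/2 ≤ g k x} := by
          intro x hx
          rw [Function.mem_support] at hx
          by_contra hc
          rw [Set.mem_setOf_eq, not_le] at hc
          apply hx
          rw [hhval x, max_eq_right (by linarith), min_eq_left zero_le_one]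
        have hclosed : IsClosed {x | 1/2 ≤ g k x} :=
          isClosed_le continuous_const (g k).continuous
        have h2 : tsupport ⇑h ⊆ {x | 1/2 ≤ g k x} := closure_minimal hsub hclosed
        intro x hx
        by_contra hxA
        have h3 := hgle k x
        rw [Set.indicator_of_notMem hxA] at h3
        have := h2 hx
        rw [Set.mem_setOf_eq] at this
        linarith
      have hh1 : ∀ x ∈ B k, h x = 1 := by
        intro x hx
        rw [Set.mem_setOf_eq] at hx
        rw [hhval x, max_eq_left (by linarith), min_eq_right (by linarith)]
      -- `h • v = 0`
      have hhv : (⟨h, hhR⟩ : ↥R) • v = 0 := by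
        have hmem : ‖(⟨h, hhR⟩ : ↥R) • v‖ ∈
            {r : ℝ | ∃ f : ↥R, tsupport ⇑((f : X →ᵇ ℝ)) ⊆ A ∧ ‖(f : X →ᵇ ℝ)‖ ≤ 1 ∧
              r = ‖f • v‖} := ⟨⟨h, hhR⟩, hsupp_h, hnorm_h, rfl⟩
        have h1 : ‖(⟨h, hhR⟩ : ↥R) • v‖ ≤ locNorm R A v := le_csSup (hbddR A v) hmem
        rw [hv] at h1
        exact norm_le_zero_iff.1 h1
      have hhv' : (⟨h, hRR' hhR⟩ : ↥R') • v = 0 := by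
        rw [← hrestrict h hhR (hRR' hhR) v]
        exact hhv
      -- `locNorm R' (B k) v = 0`
      unfold locNorm
      apply le_antisymm
      · apply Real.sSup_le _ le_rfl
        rintro r ⟨f', hsupp', hf'1, rfl⟩
        have hfh : (f' : X →ᵇ ℝ) * h = (f' : X →ᵇ ℝ) := by
          ext x
          by_cases hx : x ∈ tsupport ⇑(f' : X →ᵇ ℝ)
          · have h1 : h x = 1 := hh1 x (hsupp' hx)
            simp [h1]
          · have h1 : (f' : X →ᵇ ℝ) x = 0 := image_eq_zero_of_notMem_tsupport hx
            simp [h1]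
        have hmul : f' = f' * (⟨h, hRR' hhR⟩ : ↥R') := by
          apply Subtype.ext
          exact hfh.symm
        have hzero : f' • v = 0 := by
          rw [hmul, mul_smul, hhv', smul_zero]
        rw [hzero, norm_zero]
      · exact le_csSup (hbdd' (B k) v) (hzero' (B k) v)
    -- pass to the limit using σ-additivity
    have hlim := sigmaAdditive_mono hadd B (fun k => (hBopen k).measurableSet) hBmono
    rw [hBunion] at hlim
    have hlimv : Tendsto (fun k => N (B k) v) atTop (𝓝 (N A v)) :=
      ((ContinuousLinearMap.apply ℝ ℝ v).continuous.tendsto (N A)).comp hlim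
    have hconst : Tendsto (fun _ : ℕ => (0 : ℝ)) atTop (𝓝 (N A v)) :=
      hlimv.congr hNB
    exact (tendsto_nhds_unique hconst tendsto_const_nhds)
end
end

section
/- Let X be a Polish space, R ⊆ C_b(X) a subring that approximates open sets and V a normed R-module in which every element has compact support, i.e. for each v ∈ V there exists a compact set K ⊆ X with supp v ⊆ K (meaning ‖v‖_{|X∖K} = 0). Then every continuous linear functional F ∈ V' is tight with respect to R. -/
open BoundedContinuousFunction Filter Topology Set MeasureTheory ENNReal

noncomputable section

/-- if every element of the normed `R`-module `V` has compact support,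
then every `F ∈ V'` is tight with respect to `R`. -/
theorem statement11 {X : Type*} [MetricSpace X] [CompleteSpace X]
    [TopologicalSpace.SeparableSpace X]
    {V : Type*} [NormedAddCommGroup V] [NormedSpace ℝ V]
    (R : Subring (X →ᵇ ℝ)) [Module R V]
    (hR : ApproximatesOpenSets R) (hconst : ConstSMulCompat R V) (hnorm : NormSMulCompat R V)
    (hsupp : ∀ v : V, ∃ K : Set X, IsCompact K ∧ locNorm R Kᶜ v = 0)
    (F : V →L[ℝ] ℝ) : IsTight R F := by
  intro v f hanti htend
  obtain ⟨K, hKcomp, hKloc⟩ := hsupp v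
  -- all f n are nonnegative
  have hfnn : ∀ n x, 0 ≤ (f n : X →ᵇ ℝ) x := fun n x =>
    le_of_tendsto (htend x) (eventually_atTop.2 ⟨n, fun m hm => hanti x hm⟩)
  -- basic norm bound for a single smul
  have hsmul_le : ∀ (g : ↥R) (w : V) (M : ℝ), 0 ≤ M → ‖(g : X →ᵇ ℝ)‖ ≤ M →
      ‖g • w‖ ≤ M * ‖w‖ := by
    intro g w M hM hg
    have := hnorm {0} (fun _ => g) (fun _ => w) M ‖w‖ hM (norm_nonneg w)
      (by rw [Finset.coe_singleton]; exact Set.pairwise_singleton _ _) (by simpa using hg) (by simp)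
    simpa using this
  -- elements of R supported in Kᶜ kill v
  set S : Set ℝ :=
    {r : ℝ | ∃ g : ↥R, tsupport ⇑((g : X →ᵇ ℝ)) ⊆ Kᶜ ∧ ‖(g : X →ᵇ ℝ)‖ ≤ 1 ∧ r = ‖g • v‖}
    with hS
  have hSsup : sSup S = 0 := hKloc
  have hSbdd : BddAbove S := by
    refine ⟨‖v‖, fun r hr => ?_⟩
    obtain ⟨g, _, hg1, rfl⟩ := hr
    simpa using hsmul_le g v 1 one_pos.le hg1
  have hzero : ∀ g : ↥R, tsupport ⇑((g : X →ᵇ ℝ)) ⊆ Kᶜ → g • v = 0 := by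
    intro g hg
    by_cases h0 : (g : X →ᵇ ℝ) = 0
    · have : g = 0 := Subtype.ext h0
      simp [this]
    · set c : ℝ := ‖(g : X →ᵇ ℝ)‖⁻¹ with hc
      have hgpos : 0 < ‖(g : X →ᵇ ℝ)‖ := norm_pos_iff.mpr h0
      have hcpos : 0 < c := inv_pos.mpr hgpos
      set g' : ↥R := ⟨const X c, hR.const_mem c⟩ * g with hg'
      have hg'coe : (g' : X →ᵇ ℝ) = const X c * (g : X →ᵇ ℝ) := rfl
      have hnorm1 : ‖(g' : X →ᵇ ℝ)‖ ≤ 1 := by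
        rw [hg'coe]
        calc ‖const X c * (g : X →ᵇ ℝ)‖ ≤ ‖const X c‖ * ‖(g : X →ᵇ ℝ)‖ := norm_mul_le _ _
          _ ≤ ‖c‖ * ‖(g : X →ᵇ ℝ)‖ := by
              gcongr; exact norm_const_le c
          _ = c * ‖(g : X →ᵇ ℝ)‖ := by rw [Real.norm_eq_abs, abs_of_pos hcpos]
          _ = 1 := inv_mul_cancel₀ (ne_of_gt hgpos)
      have hsupp' : tsupport ⇑((g' : X →ᵇ ℝ)) ⊆ tsupport ⇑((g : X →ᵇ ℝ)) := by
        apply closure_mono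
        intro x hx
        simp only [Function.mem_support] at hx ⊢
        intro h
        apply hx
        rw [hg'coe]
        simp [h]
      have hmem : ‖g' • v‖ ∈ S := ⟨g', hsupp'.trans hg, hnorm1, rfl⟩
      have hle : ‖g' • v‖ ≤ 0 := hSsup ▸ le_csSup hSbdd hmem
      have h0' : g' • v = 0 := norm_le_zero_iff.mp hle
      have heq : g' • v = c • (g • v) := by
        rw [hg', mul_smul, hconst c (hR.const_mem c) (g • v)]
      rw [heq] at h0'
      rcases smul_eq_zero.mp h0' with hc0 | hv0
      · exact absurd hc0 (ne_of_gt hcpos)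
      · exact hv0
  -- main estimate
  rw [NormedAddCommGroup.tendsto_nhds_zero]
  intro ε hε
  set δ : ℝ := ε / ((‖F‖ + 1) * (‖v‖ + 1)) with hδdef
  have hδpos : 0 < δ := div_pos hε (by positivity)
  have hUopen : ∀ n, IsOpen {x | (f n : X →ᵇ ℝ) x < δ} := fun n =>
    isOpen_lt (map_continuous _) continuous_const
  have hcover : K ⊆ ⋃ n, {x | (f n : X →ᵇ ℝ) x < δ} := by
    intro x _
    obtain ⟨n, hn⟩ := ((htend x).eventually (gt_mem_nhds hδpos)).exists
    exact Set.mem_iUnion.mpr ⟨n, hn⟩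
  obtain ⟨t, ht⟩ := hKcomp.elim_finite_subcover _ hUopen hcover
  set N := t.sup id with hN
  have hKN : ∀ x ∈ K, (f N : X →ᵇ ℝ) x < δ := by
    intro x hx
    obtain ⟨i, hit, hxi⟩ := Set.mem_iUnion₂.mp (ht hx)
    exact lt_of_le_of_lt (hanti x (Finset.le_sup (f := id) hit)) hxi
  filter_upwards [eventually_ge_atTop N] with n hn
  have hKn : ∀ x ∈ K, (f n : X →ᵇ ℝ) x < δ := fun x hx =>
    lt_of_le_of_lt (hanti x hn) (hKN x hx)
  obtain ⟨h, hhR, hh⟩ := hR.inf_mem (f n) (const X δ) (f n).2 (hR.const_mem δ)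
  set g : ↥R := ⟨h, hhR⟩ with hgdef
  have hcoe_sub : ((f n - g : ↥R) : X →ᵇ ℝ) = (f n : X →ᵇ ℝ) - h := rfl
  have hdiff : tsupport ⇑(((f n - g : ↥R) : X →ᵇ ℝ)) ⊆ Kᶜ := by
    have hclosed : IsClosed {x | δ ≤ (f n : X →ᵇ ℝ) x} :=
      isClosed_le continuous_const (map_continuous _)
    have hsub : tsupport ⇑(((f n - g : ↥R) : X →ᵇ ℝ)) ⊆ {x | δ ≤ (f n : X →ᵇ ℝ) x} := by
      apply closure_minimal _ hclosed
      intro x hx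
      simp only [Function.mem_support] at hx
      by_contra hcon
      simp only [Set.mem_setOf_eq, not_le] at hcon
      apply hx
      rw [hcoe_sub]
      have : h x = (f n : X →ᵇ ℝ) x := by
        rw [hh x]
        simpa using min_eq_left hcon.le
      simp [this]
    exact hsub.trans fun x hx hxK => absurd (hKn x hxK) (not_lt.mpr hx)
  have heq : (f n) • v = g • v := by
    have h0 := hzero (f n - g) hdiff
    rw [sub_smul] at h0
    exact sub_eq_zero.mp h0
  have hgnorm : ‖(g : X →ᵇ ℝ)‖ ≤ δ := by
    refine (BoundedContinuousFunction.norm_le hδpos.le).mpr fun x => ?_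
    have hgx : (g : X →ᵇ ℝ) x = min ((f n : X →ᵇ ℝ) x) ((const X δ) x) := hh x
    rw [Real.norm_eq_abs, abs_le, hgx]
    constructor
    · exact le_trans (neg_nonpos.mpr hδpos.le) (le_min (hfnn n x) (by simpa using hδpos.le))
    · simp only [BoundedContinuousFunction.const_apply] at *
      exact min_le_right ((f n : X →ᵇ ℝ) x) δ
  have hbound : ‖F ((f n) • v)‖ ≤ ‖F‖ * (δ * ‖v‖) := by
    calc ‖F ((f n) • v)‖ = ‖F (g • v)‖ := by rw [heq]
      _ ≤ ‖F‖ * ‖g • v‖ := F.le_opNorm _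
      _ ≤ ‖F‖ * (δ * ‖v‖) := by
          exact mul_le_mul_of_nonneg_left (hsmul_le g v δ hδpos.le hgnorm) (norm_nonneg F)
  have hde : δ * ((‖F‖ + 1) * (‖v‖ + 1)) = ε := div_mul_cancel₀ _ (by positivity)
  have hlt : ‖F‖ * (δ * ‖v‖) < ε := by
    nlinarith [norm_nonneg F, norm_nonneg v, hδpos]
  exact lt_of_le_of_lt hbound hlt
end
end
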